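/- arXiv:2212.11371 — 4 statements merged into one kernel-verified Lean document; each statement's English description precedes it below -/
import Mathlib

section
/- Let r ≥ 1 and let θ = (θ₁, …, θ_{2r}) ∈ {1,2}^{2r} be a symmetric word of even length, i.e. θ_i = θ_{2r+1−i} for all 1 ≤ i ≤ 2r. For x, y ∈ (0,1) define h(x,y) = 2 + y + [0; θ₁, …, θ_{2r}, 2 + x]. Then: (i) for each fixed x ∈ (0,1) the function y ↦ h(x,y) is strictly increasing on (0,1), and for each fixed y ∈ (0,1) the function x ↦ h(x,y) is strictly decreasing on (0,1); (ii) if x, y ∈ (0,1) satisfy h(x,y) ≥ h(y,x), then x ≤ y and h(x,y) ≥ h(y,y); (iii) the function y ↦ h(y,y) = 2 + y + [0; θ₁, …, θ_{2r}, 2 + y] is strictly increasing on (0,1). Consequently, the minimal possible value of max{h(x,y), h(y,x)} over x, y ranging in any set X ⊆ (0,1) possessing a minimum is h(y₀, y₀), where y₀ = min X. -/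
open Filter Set MeasureTheory
open scoped ENNReal

/-- Finite continued fraction `[a 0; a 1, ..., a n]`. -/
noncomputable def cfConv : (ℕ → ℝ) → ℕ → ℝ
  | a, 0 => a 0
  | a, n + 1 => a 0 + 1 / cfConv (fun i => a (i + 1)) n

/-- Value of the infinite continued fraction `[a 0; a 1, a 2, ...]`,
as the limit of its convergents. -/
noncomputable def cfVal (a : ℕ → ℝ) : ℝ := limUnder atTop (cfConv a)

/-- `λ_k(α) = [α_k; α_{k+1}, ...] + [0; α_{k-1}, α_{k-2}, ...]`. -/
noncomputable def lambdaVal (α : ℤ → ℕ) (k : ℤ) : ℝ :=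
  cfVal (fun n => (α (k + n) : ℝ)) +
  cfVal (fun n => if n = 0 then 0 else (α (k - n) : ℝ))

/-- The Markov value `m(α) = sup_{k ∈ ℤ} λ_k(α)`. -/
noncomputable def markovValue (α : ℤ → ℕ) : ℝ := ⨆ k : ℤ, lambdaVal α k

/-- The Markov spectrum. -/
def markovSpectrum : Set ℝ :=
  { x | ∃ α : ℤ → ℕ, (∀ n, 0 < α n) ∧ BddAbove (range (lambdaVal α)) ∧
      markovValue α = x }

/-- The dimension function `d(t) = dim_H (M ∩ (-∞, t))`. -/
noncomputable def dimFun (t : ℝ) : ℝ≥0∞ := dimH (markovSpectrum ∩ Iio t)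

/-- `h(x,y) = 2 + y + [0; θ₁, …, θ_{2r}, 2 + x]`, where the finite continued
fraction has first entry `0`, then the entries of the word `θ`, then `2 + x`. -/
noncomputable def hAux (r : ℕ) (θ : ℕ → ℕ) (x y : ℝ) : ℝ :=
  2 + y +
    cfConv (fun n => if n = 0 then 0 else if n ≤ 2 * r then (θ n : ℝ) else 2 + x)
      (2 * r + 1)

lemma cf_key : ∀ (m : ℕ) (a : ℕ → ℝ), (∀ i, i ≤ m → 1 ≤ a i) →
    ∀ z₁ z₂ : ℝ, 2 ≤ z₁ → z₁ < z₂ →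
    1 < cfConv (fun n => if n ≤ m then a n else z₁) (m + 1) ∧
    1 < cfConv (fun n => if n ≤ m then a n else z₂) (m + 1) ∧
    (if Even m
      then cfConv (fun n => if n ≤ m then a n else z₂) (m + 1) <
           cfConv (fun n => if n ≤ m then a n else z₁) (m + 1)
      else cfConv (fun n => if n ≤ m then a n else z₁) (m + 1) <
           cfConv (fun n => if n ≤ m then a n else z₂) (m + 1)) ∧
    |cfConv (fun n => if n ≤ m then a n else z₂) (m + 1) -
     cfConv (fun n => if n ≤ m then a n else z₁) (m + 1)| ≤ (z₂ - z₁) / 4 := by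
  intro m
  induction m with
  | zero =>
    intro a ha z₁ z₂ hz1 hz12
    have ha0 : 1 ≤ a 0 := ha 0 le_rfl
    have hv : ∀ z : ℝ, cfConv (fun n => if n ≤ 0 then a n else z) 1 = a 0 + 1 / z := by
      intro z; simp [cfConv]
    rw [hv, hv]
    have hz1' : (0:ℝ) < z₁ := by linarith
    have hz2' : (0:ℝ) < z₂ := by linarith
    refine ⟨by have := one_div_pos.mpr hz1'; linarith,
            by have := one_div_pos.mpr hz2'; linarith, ?_, ?_⟩
    · rw [if_pos Even.zero]
      have : 1 / z₂ < 1 / z₁ := one_div_lt_one_div_of_lt hz1' hz12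
      linarith
    · have h1 : a 0 + 1 / z₂ - (a 0 + 1 / z₁) = -((z₂ - z₁) / (z₁ * z₂)) := by
        field_simp; ring
      rw [h1, abs_neg, abs_of_nonneg (div_nonneg (by linarith) (by positivity))]
      rw [div_le_div_iff₀ (by positivity) (by norm_num)]
      have h4 : (4:ℝ) ≤ z₁ * z₂ := by nlinarith
      nlinarith [mul_le_mul_of_nonneg_left h4 (le_of_lt (sub_pos.mpr hz12))]
  | succ m ih =>
    intro a ha z₁ z₂ hz1 hz12
    have ha' : ∀ i, i ≤ m → 1 ≤ a (i + 1) := fun i hi => ha (i + 1) (by omega)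
    obtain ⟨hW1, hW2, hsign, hlip⟩ := ih (fun n => a (n + 1)) ha' z₁ z₂ hz1 hz12
    set W₁ := cfConv (fun n => if n ≤ m then a (n + 1) else z₁) (m + 1) with hWdef1
    set W₂ := cfConv (fun n => if n ≤ m then a (n + 1) else z₂) (m + 1) with hWdef2
    have hv : ∀ z : ℝ, cfConv (fun n => if n ≤ m + 1 then a n else z) (m + 2) =
        a 0 + 1 / cfConv (fun n => if n ≤ m then a (n + 1) else z) (m + 1) := by
      intro z
      have h1 : cfConv (fun n => if n ≤ m + 1 then a n else z) (m + 2) =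
          (if 0 ≤ m + 1 then a 0 else z) +
          1 / cfConv (fun n => if n + 1 ≤ m + 1 then a (n + 1) else z) (m + 1) := by
        simp [cfConv]
      rw [h1]
      have h2 : (fun n => if n + 1 ≤ m + 1 then a (n + 1) else z) =
          (fun n => if n ≤ m then a (n + 1) else z) := by
        funext n
        by_cases hn : n ≤ m
        · rw [if_pos (by omega), if_pos hn]
        · rw [if_neg (by omega), if_neg hn]
      rw [h2, if_pos (by omega)]
    rw [hv, hv]
    have ha0 : 1 ≤ a 0 := ha 0 (by omega)
    have hW1' : (0:ℝ) < W₁ := by linarith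
    have hW2' : (0:ℝ) < W₂ := by linarith
    refine ⟨by have := one_div_pos.mpr hW1'; linarith,
            by have := one_div_pos.mpr hW2'; linarith, ?_, ?_⟩
    · by_cases hev : Even (m + 1)
      · have hodd : ¬ Even m := Nat.even_add_one.mp hev
        rw [if_neg hodd] at hsign
        rw [if_pos hev]
        have : 1 / W₂ < 1 / W₁ := one_div_lt_one_div_of_lt hW1' hsign
        linarith
      · have heven : Even m := not_not.mp (mt Nat.even_add_one.mpr hev)
        rw [if_pos heven] at hsign
        rw [if_neg hev]
        have : 1 / W₁ < 1 / W₂ := one_div_lt_one_div_of_lt hW2' hsign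
        linarith
    · have h1 : a 0 + 1 / W₂ - (a 0 + 1 / W₁) = (W₁ - W₂) / (W₁ * W₂) := by
        field_simp
        ring
      rw [h1, abs_div, abs_of_nonneg (by positivity : (0:ℝ) ≤ W₁ * W₂)]
      have h2 : |W₁ - W₂| / (W₁ * W₂) ≤ |W₁ - W₂| :=
        div_le_self (abs_nonneg _) (by nlinarith)
      calc |W₁ - W₂| / (W₁ * W₂) ≤ |W₁ - W₂| := h2
        _ = |W₂ - W₁| := abs_sub_comm _ _
        _ ≤ (z₂ - z₁) / 4 := hlip

/-- The continued-fraction part of `hAux`: `[0; θ₁, …, θ_{2r}, 2 + x]`. -/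
noncomputable def Faux (r : ℕ) (θ : ℕ → ℕ) (x : ℝ) : ℝ :=
  cfConv (fun n => if n = 0 then 0 else if n ≤ 2 * r then (θ n : ℝ) else 2 + x)
    (2 * r + 1)

lemma hAux_eq (r : ℕ) (θ : ℕ → ℕ) (x y : ℝ) : hAux r θ x y = 2 + y + Faux r θ x := rfl

lemma Faux_key (r : ℕ) (hr : 1 ≤ r) (θ : ℕ → ℕ)
    (hθ : ∀ i, 1 ≤ i → i ≤ 2 * r → θ i = 1 ∨ θ i = 2)
    {x₁ x₂ : ℝ} (hx1 : 0 < x₁) (h12 : x₁ < x₂) :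
    Faux r θ x₂ < Faux r θ x₁ ∧ Faux r θ x₁ - Faux r θ x₂ ≤ (x₂ - x₁) / 4 := by
  set m := 2 * r - 1 with hmdef
  have hm : m + 1 = 2 * r := by omega
  have ha : ∀ i, i ≤ m → (1:ℝ) ≤ ((θ (i + 1) : ℕ) : ℝ) := by
    intro i hi
    rcases hθ (i + 1) (by omega) (by omega) with h | h <;> rw [h] <;> norm_num
  obtain ⟨hW1, hW2, hsign, hlip⟩ :=
    cf_key m (fun n => ((θ (n + 1) : ℕ) : ℝ)) ha (2 + x₁) (2 + x₂)
      (by linarith) (by linarith)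
  have hodd : ¬ Even m := by rw [Nat.even_iff]; omega
  rw [if_neg hodd] at hsign
  set W₁ := cfConv (fun n => if n ≤ m then ((θ (n + 1) : ℕ) : ℝ) else 2 + x₁) (m + 1)
  set W₂ := cfConv (fun n => if n ≤ m then ((θ (n + 1) : ℕ) : ℝ) else 2 + x₂) (m + 1)
  have hFeq : ∀ x : ℝ, Faux r θ x =
      0 + 1 / cfConv (fun n => if n ≤ m then ((θ (n + 1) : ℕ) : ℝ) else 2 + x) (m + 1) := by
    intro x
    have hsplit : Faux r θ x =
        (if (0:ℕ) = 0 then (0:ℝ) else if (0:ℕ) ≤ 2 * r then (θ 0 : ℝ) else 2 + x) +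
        1 / cfConv (fun n => if n + 1 = 0 then (0:ℝ)
            else if n + 1 ≤ 2 * r then (θ (n + 1) : ℝ) else 2 + x) (2 * r) := by
      have h2r : 2 * r + 1 = (2 * r) + 1 := rfl
      unfold Faux
      rw [h2r]
      simp only [cfConv]
    rw [hsplit, if_pos rfl]
    have h2 : (fun n => if n + 1 = 0 then (0:ℝ)
          else if n + 1 ≤ 2 * r then (θ (n + 1) : ℝ) else 2 + x) =
        (fun n => if n ≤ m then ((θ (n + 1) : ℕ) : ℝ) else 2 + x) := by
      funext n
      rw [if_neg (by omega : ¬ n + 1 = 0)]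
      by_cases hn : n ≤ m
      · rw [if_pos (by omega : n + 1 ≤ 2 * r), if_pos hn]
      · rw [if_neg (by omega : ¬ n + 1 ≤ 2 * r), if_neg hn]
    rw [h2, hm]
  rw [hFeq, hFeq]
  have hW1' : (0:ℝ) < W₁ := by linarith
  have hW2' : (0:ℝ) < W₂ := by linarith
  constructor
  · have : 1 / W₂ < 1 / W₁ := one_div_lt_one_div_of_lt hW1' hsign
    linarith
  · have h1 : 0 + 1 / W₁ - (0 + 1 / W₂) = (W₂ - W₁) / (W₁ * W₂) := by
      field_simp
      ring
    rw [h1]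
    have h2 : (W₂ - W₁) / (W₁ * W₂) ≤ W₂ - W₁ :=
      div_le_self (by linarith) (by nlinarith)
    have h3 : W₂ - W₁ ≤ (x₂ - x₁) / 4 := by
      have := le_abs_self (W₂ - W₁)
      have h4 : (2 + x₂ - (2 + x₁)) = x₂ - x₁ := by ring
      rw [h4] at hlip
      linarith
    linarith

/-- Monotonicity properties of `h(x,y) = 2 + y + [0; θ, 2 + x]` for a symmetric
word `θ ∈ {1,2}^{2r}`, and the consequence that the minimal value of
`max{h(x,y), h(y,x)}` over `x, y` in a set `X ⊆ (0,1)` possessing a minimum `y₀`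
is `h(y₀, y₀)`. -/
theorem hAux_monotonicity (r : ℕ) (hr : 1 ≤ r) (θ : ℕ → ℕ)
    (hθ : ∀ i, 1 ≤ i → i ≤ 2 * r → θ i = 1 ∨ θ i = 2)
    (hsym : ∀ i, 1 ≤ i → i ≤ 2 * r → θ i = θ (2 * r + 1 - i)) :
    (∀ x ∈ Ioo (0 : ℝ) 1, StrictMonoOn (fun y => hAux r θ x y) (Ioo 0 1)) ∧
    (∀ y ∈ Ioo (0 : ℝ) 1, StrictAntiOn (fun x => hAux r θ x y) (Ioo 0 1)) ∧
    (∀ x ∈ Ioo (0 : ℝ) 1, ∀ y ∈ Ioo (0 : ℝ) 1,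
      hAux r θ x y ≥ hAux r θ y x → x ≤ y ∧ hAux r θ x y ≥ hAux r θ y y) ∧
    StrictMonoOn (fun y => hAux r θ y y) (Ioo 0 1) ∧
    (∀ X : Set ℝ, X ⊆ Ioo (0 : ℝ) 1 → ∀ y₀ : ℝ, IsLeast X y₀ →
      IsLeast
        ((fun p : ℝ × ℝ => max (hAux r θ p.1 p.2) (hAux r θ p.2 p.1)) '' (X ×ˢ X))
        (hAux r θ y₀ y₀)) := by
  have key : ∀ x₁ x₂ : ℝ, 0 < x₁ → x₁ < x₂ →
      Faux r θ x₂ < Faux r θ x₁ ∧ Faux r θ x₁ - Faux r θ x₂ ≤ (x₂ - x₁) / 4 :=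
    fun x₁ x₂ h1 h2 => Faux_key r hr θ hθ h1 h2
  -- (ii) part auxiliary: F antitone (non-strict) on x ≤ y in (0,1)
  have Fanti : ∀ x y : ℝ, 0 < x → x ≤ y → Faux r θ y ≤ Faux r θ x := by
    intro x y hx hxy
    rcases eq_or_lt_of_le hxy with h | h
    · rw [h]
    · exact le_of_lt (key x y hx h).1
  have part1 : ∀ x ∈ Ioo (0 : ℝ) 1, StrictMonoOn (fun y => hAux r θ x y) (Ioo 0 1) := by
    intro x _ y₁ _ y₂ _ h
    simp only [hAux_eq]
    linarith
  have part2 : ∀ y ∈ Ioo (0 : ℝ) 1, StrictAntiOn (fun x => hAux r θ x y) (Ioo 0 1) := by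
    intro y _ x₁ hx₁ x₂ _ h
    simp only [hAux_eq]
    have := (key x₁ x₂ hx₁.1 h).1
    linarith
  have part3 : ∀ x ∈ Ioo (0 : ℝ) 1, ∀ y ∈ Ioo (0 : ℝ) 1,
      hAux r θ x y ≥ hAux r θ y x → x ≤ y ∧ hAux r θ x y ≥ hAux r θ y y := by
    intro x hx y hy hge
    rw [hAux_eq, hAux_eq] at hge
    have hxy : x ≤ y := by
      by_contra hlt
      push_neg at hlt
      have := (key y x hy.1 hlt).1
      linarith
    refine ⟨hxy, ?_⟩
    rw [hAux_eq, hAux_eq]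
    have := Fanti x y hx.1 hxy
    linarith
  have part4 : StrictMonoOn (fun y => hAux r θ y y) (Ioo 0 1) := by
    intro y₁ hy₁ y₂ _ h
    simp only [hAux_eq]
    have := (key y₁ y₂ hy₁.1 h).2
    linarith
  refine ⟨part1, part2, part3, part4, ?_⟩
  intro X hX y₀ hy₀
  have hy₀I : y₀ ∈ Ioo (0:ℝ) 1 := hX hy₀.1
  constructor
  · exact ⟨(y₀, y₀), ⟨hy₀.1, hy₀.1⟩, max_self _⟩
  · rintro v ⟨⟨x, y⟩, ⟨hxX, hyX⟩, rfl⟩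
    have hxI : x ∈ Ioo (0:ℝ) 1 := hX hxX
    have hyI : y ∈ Ioo (0:ℝ) 1 := hX hyX
    have diag_mono : ∀ z ∈ Ioo (0:ℝ) 1, y₀ ≤ z → hAux r θ y₀ y₀ ≤ hAux r θ z z := by
      intro z hzI hz
      rcases eq_or_lt_of_le hz with h | h
      · rw [h]
      · exact le_of_lt (part4 hy₀I hzI h)
    rcases le_total (hAux r θ y x) (hAux r θ x y) with hc | hc
    · obtain ⟨hxy, hge⟩ := part3 x hxI y hyI hc
      calc hAux r θ y₀ y₀ ≤ hAux r θ y y := diag_mono y hyI (hy₀.2 hyX)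
        _ ≤ hAux r θ x y := hge
        _ ≤ max (hAux r θ x y) (hAux r θ y x) := le_max_left _ _
    · obtain ⟨hxy, hge⟩ := part3 y hyI x hxI hc
      calc hAux r θ y₀ y₀ ≤ hAux r θ x x := diag_mono x hxI (hy₀.2 hxX)
        _ ≤ hAux r θ y x := hge
        _ ≤ max (hAux r θ x y) (hAux r θ y x) := le_max_right _ _
end

section
/- For every bi-infinite sequence α = (α_n)_{n∈ℤ} with α_n ∈ {1,2} for all n, and all integers j ≥ 1 and k ≥ 1, the following upper bound holds: λ₀(α) ≤ [α₀; α₁, …, α_j, T(j)] + [0; α_{−1}, …, α_{−k}, T(k)], where T(n) denotes the periodic tail 1,2,1,2,1,2,… if n is even, and the periodic tail 2,1,2,1,2,1,… if n is odd. Explicitly: if k and j are both even, λ₀(α) ≤ [α₀; α₁, …, α_j, \overline{1,2}] + [0; α_{−1}, …, α_{−k}, \overline{1,2}]; if k is even and j is odd, λ₀(α) ≤ [α₀; α₁, …, α_j, \overline{2,1}] + [0; α_{−1}, …, α_{−k}, \overline{1,2}]; if k is odd and j is even, λ₀(α) ≤ [α₀; α₁, …, α_j, \overline{1,2}] + [0;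 α_{−1}, …, α_{−k}, \overline{2,1}]; if k and j are both odd, λ₀(α) ≤ [α₀; α₁, …, α_j, \overline{2,1}] + [0; α_{−1}, …, α_{−k}, \overline{2,1}]. -/
open Filter Set MeasureTheory
open scoped ENNReal

open Topology

/-- `[a 0; a 1, …, a j, \overline{b₁, b₂}]` : the infinite continued fraction
keeping the entries of `a` up to index `j` and with eventually periodic tail
alternating `b₁, b₂, b₁, b₂, …` from position `j + 1` on. -/
noncomputable def tailCF (a : ℕ → ℝ) (j : ℕ) (b₁ b₂ : ℝ) : ℝ :=
  cfVal (fun n => if n ≤ j then a n else if (n - j) % 2 = 1 then b₁ else b₂)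

lemma cfConv_zero (a : ℕ → ℝ) : cfConv a 0 = a 0 := rfl

lemma cfConv_succ (a : ℕ → ℝ) (n : ℕ) :
    cfConv a (n + 1) = a 0 + 1 / cfConv (fun i => a (i + 1)) n := rfl

lemma cfConv_pos : ∀ (n : ℕ) (a : ℕ → ℝ), (∀ i, 0 < a i) → 0 < cfConv a n
  | 0, a, h => h 0
  | n + 1, a, h => by
      have := cfConv_pos n (fun i => a (i + 1)) (fun i => h (i + 1))
      rw [cfConv_succ]
      exact add_pos (h 0) (one_div_pos.mpr this)

lemma one_le_cfConv : ∀ (n : ℕ) (a : ℕ → ℝ), (∀ i, 1 ≤ a i) → 1 ≤ cfConv a n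
  | 0, a, h => h 0
  | n + 1, a, h => by
      have h1 := one_le_cfConv n (fun i => a (i + 1)) (fun i => h (i + 1))
      rw [cfConv_succ]
      have : (0:ℝ) < cfConv (fun i => a (i + 1)) n := lt_of_lt_of_le one_pos h1
      have := one_div_pos.mpr this
      linarith [h 0]

lemma cfConv_le_three : ∀ (n : ℕ) (a : ℕ → ℝ), (∀ i, 1 ≤ a i ∧ a i ≤ 2) →
    cfConv a n ≤ 3
  | 0, a, h => by rw [cfConv_zero]; linarith [(h 0).2]
  | n + 1, a, h => by
      have h1 := one_le_cfConv n (fun i => a (i + 1)) (fun i => (h (i + 1)).1)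
      rw [cfConv_succ]
      have hd : 1 / cfConv (fun i => a (i + 1)) n ≤ 1 := by
        rw [div_le_one (by linarith)]; linarith
      linarith [(h 0).2]

lemma cfConv_ge_43 (n : ℕ) (a : ℕ → ℝ) (h : ∀ i, 1 ≤ a i ∧ a i ≤ 2) :
    4/3 ≤ cfConv a (n + 1) := by
  have h3 := cfConv_le_three n (fun i => a (i + 1)) (fun i => h (i + 1))
  have h1 := one_le_cfConv n (fun i => a (i + 1)) (fun i => (h (i + 1)).1)
  rw [cfConv_succ]
  have : (1:ℝ)/3 ≤ 1 / cfConv (fun i => a (i + 1)) n :=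
    one_div_le_one_div_of_le (by linarith) h3
  linarith [(h 0).1]

lemma cfConv_diff : ∀ (n : ℕ) (a : ℕ → ℝ), (∀ i, 1 ≤ a (i + 1) ∧ a (i + 1) ≤ 2) →
    |cfConv a (n + 1) - cfConv a (n + 2)| ≤ 2 * (9/16) ^ n
  | 0, a, h => by
      have h1 := one_le_cfConv 0 (fun i => a (i + 1)) (fun i => (h i).1)
      have h1' := one_le_cfConv 1 (fun i => a (i + 1)) (fun i => (h i).1)
      have h3 := cfConv_le_three 0 (fun i => a (i + 1)) h
      have h3' := cfConv_le_three 1 (fun i => a (i + 1)) h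
      rw [show (2:ℕ) = 1 + 1 from rfl, cfConv_succ, cfConv_succ]
      have e : a 0 + 1 / cfConv (fun i => a (i + 1)) 0 -
          (a 0 + 1 / cfConv (fun i => a (i + 1)) 1) =
          1 / cfConv (fun i => a (i + 1)) 0 - 1 / cfConv (fun i => a (i + 1)) 1 := by
        ring
      rw [e, abs_le]
      have p0 : (0:ℝ) < cfConv (fun i => a (i + 1)) 0 := by linarith
      have p1 : (0:ℝ) < cfConv (fun i => a (i + 1)) 1 := by linarith
      have b0 : 1 / cfConv (fun i => a (i + 1)) 0 ≤ 1 := by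
        rw [div_le_one p0]; linarith
      have b0' : (1:ℝ)/3 ≤ 1 / cfConv (fun i => a (i + 1)) 0 :=
        one_div_le_one_div_of_le (by linarith) h3
      have b1 : 1 / cfConv (fun i => a (i + 1)) 1 ≤ 1 := by
        rw [div_le_one p1]; linarith
      have b1' : (1:ℝ)/3 ≤ 1 / cfConv (fun i => a (i + 1)) 1 :=
        one_div_le_one_div_of_le (by linarith) h3'
      simp only [pow_zero, mul_one]
      constructor <;> linarith
  | n + 1, a, h => by
      set a' : ℕ → ℝ := fun i => a (i + 1) with ha'
      have h' : ∀ i, 1 ≤ a' i ∧ a' i ≤ 2 := fun i => h i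
      have IH := cfConv_diff n a' (fun i => h (i + 1))
      have hX : 4/3 ≤ cfConv a' (n + 1) := cfConv_ge_43 n a' h'
      have hY : 4/3 ≤ cfConv a' (n + 2) := cfConv_ge_43 (n + 1) a' h'
      have hX3 : cfConv a' (n + 1) ≤ 3 := cfConv_le_three (n + 1) a' h'
      have hY3 : cfConv a' (n + 2) ≤ 3 := cfConv_le_three (n + 2) a' h'
      have hXp : (0:ℝ) < cfConv a' (n + 1) := by linarith
      have hYp : (0:ℝ) < cfConv a' (n + 2) := by linarith
      have g1 : cfConv a (n + 1 + 1) = a 0 + 1 / cfConv a' (n + 1) := rfl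
      have g2 : cfConv a (n + 1 + 2) = a 0 + 1 / cfConv a' (n + 2) := rfl
      rw [g1, g2]
      have e : a 0 + 1 / cfConv a' (n + 1) - (a 0 + 1 / cfConv a' (n + 2)) =
          (cfConv a' (n + 2) - cfConv a' (n + 1)) /
            (cfConv a' (n + 1) * cfConv a' (n + 2)) := by
        field_simp
        ring
      rw [e, abs_div, abs_of_pos (mul_pos hXp hYp)]
      have hprod : (16:ℝ)/9 ≤ cfConv a' (n + 1) * cfConv a' (n + 2) := by nlinarith
      have habs : |cfConv a' (n + 2) - cfConv a' (n + 1)| ≤ 2 * (9/16) ^ n := by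
        rw [abs_sub_comm]; exact IH
      calc |cfConv a' (n + 2) - cfConv a' (n + 1)| /
            (cfConv a' (n + 1) * cfConv a' (n + 2))
          ≤ (2 * (9/16) ^ n) / (16/9) := by
            apply div_le_div₀ (by positivity) habs (by norm_num) hprod
        _ = 2 * (9/16) ^ (n + 1) := by rw [pow_succ]; ring

lemma cfConv_mono : ∀ (n : ℕ) (a b : ℕ → ℝ), (∀ i, 0 < a i) → (∀ i, 0 < b i) →
    (∀ i, i % 2 = 0 → a i ≤ b i) → (∀ i, i % 2 = 1 → b i ≤ a i) →
    cfConv a n ≤ cfConv b n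
  | 0, a, b, _, _, he, _ => he 0 rfl
  | n + 1, a, b, ha, hb, he, ho => by
      rw [cfConv_succ, cfConv_succ]
      have hba := cfConv_mono n (fun i => b (i + 1)) (fun i => a (i + 1))
        (fun i => hb (i + 1)) (fun i => ha (i + 1))
        (fun i hi => ho (i + 1) (by omega)) (fun i hi => he (i + 1) (by omega))
      have hpa := cfConv_pos n (fun i => a (i + 1)) (fun i => ha (i + 1))
      have hpb := cfConv_pos n (fun i => b (i + 1)) (fun i => hb (i + 1))
      have := one_div_le_one_div_of_le hpb hba
      linarith [he 0 rfl]

lemma cfConv_mono0 (n : ℕ) (a b : ℕ → ℝ) (h0 : a 0 = b 0)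
    (ha : ∀ i, 0 < a (i + 1)) (hb : ∀ i, 0 < b (i + 1))
    (he : ∀ i, (i + 1) % 2 = 0 → a (i + 1) ≤ b (i + 1))
    (ho : ∀ i, (i + 1) % 2 = 1 → b (i + 1) ≤ a (i + 1)) :
    cfConv a n ≤ cfConv b n := by
  cases n with
  | zero => rw [cfConv_zero, cfConv_zero, h0]
  | succ n =>
    rw [cfConv_succ, cfConv_succ, h0]
    have hba := cfConv_mono n (fun i => b (i + 1)) (fun i => a (i + 1)) hb ha
      (fun i hi => ho i (by omega)) (fun i hi => he i (by omega))
    have hpa := cfConv_pos n (fun i => a (i + 1)) ha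
    have hpb := cfConv_pos n (fun i => b (i + 1)) hb
    have := one_div_le_one_div_of_le hpb hba
    linarith

lemma cfConv_tendsto (a : ℕ → ℝ) (h : ∀ i, 1 ≤ a (i + 1) ∧ a (i + 1) ≤ 2) :
    Tendsto (cfConv a) atTop (𝓝 (cfVal a)) := by
  have hc : CauchySeq (cfConv a) := by
    apply cauchySeq_of_le_geometric (9/16) (32/9) (by norm_num)
    intro n
    rw [Real.dist_eq]
    cases n with
    | zero =>
      have h1 : (1:ℝ) ≤ a 1 := (h 0).1
      have e : cfConv a 0 - cfConv a 1 = -(1 / a 1) := by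
        rw [cfConv_succ, cfConv_zero, cfConv_zero]; ring
      rw [e, abs_neg, abs_of_nonneg (by positivity)]
      have : 1 / a 1 ≤ 1 := by rw [div_le_one (by linarith)]; exact h1
      simp only [pow_zero, mul_one]
      linarith
    | succ n =>
      have := cfConv_diff n a h
      calc |cfConv a (n + 1) - cfConv a (n + 1 + 1)| ≤ 2 * (9/16) ^ n := this
        _ = 32/9 * (9/16) ^ (n + 1) := by rw [pow_succ]; ring
  obtain ⟨L, hL⟩ := cauchySeq_tendsto_of_complete hc
  rwa [show cfVal a = L from hL.limUnder_eq]

lemma cfVal_le (a b : ℕ → ℝ) (ha : ∀ i, 1 ≤ a (i + 1) ∧ a (i + 1) ≤ 2)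
    (hb : ∀ i, 1 ≤ b (i + 1) ∧ b (i + 1) ≤ 2)
    (hmono : ∀ n, cfConv a n ≤ cfConv b n) : cfVal a ≤ cfVal b :=
  le_of_tendsto_of_tendsto' (cfConv_tendsto a ha) (cfConv_tendsto b hb) hmono

lemma tail_bound (a : ℕ → ℝ) (j : ℕ)
    (h : ∀ i, 1 ≤ a (i + 1) ∧ a (i + 1) ≤ 2) :
    cfVal a ≤ tailCF a j (if j % 2 = 0 then 1 else 2) (if j % 2 = 0 then 2 else 1) := by
  set c₁ : ℝ := if j % 2 = 0 then 1 else 2 with hc₁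
  set c₂ : ℝ := if j % 2 = 0 then 2 else 1 with hc₂
  set b : ℕ → ℝ := fun n => if n ≤ j then a n else if (n - j) % 2 = 1 then c₁ else c₂ with hb
  have htail : ∀ n, ¬ n ≤ j → b n = if n % 2 = 0 then (2:ℝ) else 1 := by
    intro n hn
    have hn' : j < n := by omega
    simp only [hb, if_neg hn]
    rcases Nat.mod_two_eq_zero_or_one j with hj2 | hj2 <;>
      rcases Nat.mod_two_eq_zero_or_one n with hn2 | hn2
    · rw [hc₁, hc₂, if_pos hj2, if_pos hj2,
        if_neg (by omega : ¬ (n - j) % 2 = 1), if_pos hn2]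
    · rw [hc₁, hc₂, if_pos hj2, if_pos hj2,
        if_pos (by omega : (n - j) % 2 = 1), if_neg (by omega : ¬ n % 2 = 0)]
    · rw [hc₁, hc₂, if_neg (by omega : ¬ j % 2 = 0), if_neg (by omega : ¬ j % 2 = 0),
        if_pos (by omega : (n - j) % 2 = 1), if_pos hn2]
    · rw [hc₁, hc₂, if_neg (by omega : ¬ j % 2 = 0), if_neg (by omega : ¬ j % 2 = 0),
        if_neg (by omega : ¬ (n - j) % 2 = 1), if_neg (by omega : ¬ n % 2 = 0)]
  have hbbound : ∀ i, 1 ≤ b (i + 1) ∧ b (i + 1) ≤ 2 := by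
    intro i
    by_cases hle : i + 1 ≤ j
    · simpa [hb, hle] using h i
    · rw [htail _ hle]; split_ifs <;> norm_num
  have hb0 : a 0 = b 0 := by simp [hb, Nat.zero_le]
  have hmono : ∀ n, cfConv a n ≤ cfConv b n := by
    intro n
    apply cfConv_mono0 n a b hb0 (fun i => by linarith [(h i).1])
      (fun i => by linarith [(hbbound i).1])
    · intro i hi
      by_cases hle : i + 1 ≤ j
      · simp [hb, hle]
      · rw [htail _ hle, if_pos hi]; exact (h i).2
    · intro i hi
      by_cases hle : i + 1 ≤ j
      · simp [hb, hle]
      · rw [htail _ hle, if_neg (by omega : ¬ (i + 1) % 2 = 0)]; exact (h i).1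
  exact cfVal_le a b (fun i => h i) hbbound hmono

/-- Upper bound on `λ₀(α)` for `α ∈ {1,2}^ℤ`: truncating at positions `j` (forward)
and `-k` (backward) and appending the periodic tail `\overline{1,2}` if the
truncation index is even, and `\overline{2,1}` if it is odd, can only increase
the value. -/
theorem lambda_zero_upper_bound (α : ℤ → ℕ) (hα : ∀ n, α n = 1 ∨ α n = 2)
    (j k : ℕ) (hj : 1 ≤ j) (hk : 1 ≤ k) :
    lambdaVal α 0 ≤
      tailCF (fun n => (α n : ℝ)) j
        (if j % 2 = 0 then 1 else 2) (if j % 2 = 0 then 2 else 1) +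
      tailCF (fun n => if n = 0 then 0 else (α (-(n : ℤ)) : ℝ)) k
        (if k % 2 = 0 then 1 else 2) (if k % 2 = 0 then 2 else 1) := by
  have hcast : ∀ m : ℤ, 1 ≤ (α m : ℝ) ∧ (α m : ℝ) ≤ 2 := by
    intro m; rcases hα m with h | h <;> rw [h] <;> norm_num
  have e1 : (fun n : ℕ => (α (0 + (n : ℤ)) : ℝ)) = fun n : ℕ => ((α n : ℝ)) := by
    funext n; rw [zero_add]
  have e2 : (fun n : ℕ => if n = 0 then (0:ℝ) else (α (0 - (n : ℤ)) : ℝ)) =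
      fun n : ℕ => if n = 0 then (0:ℝ) else (α (-(n : ℤ)) : ℝ) := by
    funext n; rw [zero_sub]
  unfold lambdaVal
  rw [e1, e2]
  apply add_le_add
  · exact tail_bound _ j (fun i => hcast ((i + 1 : ℕ) : ℤ))
  · refine tail_bound _ k (fun i => ?_)
    have := hcast (-(((i + 1 : ℕ)) : ℤ))
    simpa using this
end

section
/- Every bi-infinite sequence α ∈ {1,2}^ℤ that contains the word (1,2,1) as a factor satisfies m(α) ≥ √10, and the value √10 is attained: the periodic sequence of period (1,1,2), which contains the factor (1,2,1), has Markov value [2; \overline{1,1,2}] + [0; \overline{1,1,2}] = √10. Thus √10 is the smallest Markov value among {1,2}-sequences containing the factor (1,2,1). -/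
open Filter Set MeasureTheory
open scoped ENNReal
open scoped Topology

/-- A finite word `w` is a factor of the bi-infinite sequence `α`. -/
def hasFactor (α : ℤ → ℕ) (w : List ℕ) : Prop :=
  ∃ j : ℤ, ∀ i : Fin w.length, α (j + (i : ℕ)) = w.get i

/-- The bi-infinite periodic sequence of period `(1,1,2)`. -/
def per112 : ℤ → ℕ := fun n => if n % 3 = 2 then 2 else 1

namespace CFAux

noncomputable def cfApp : (ℕ → ℝ) → ℕ → ℝ → ℝ
  | _, 0, x => x
  | a, n + 1, x => a 0 + 1 / cfApp (fun i => a (i + 1)) n x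

lemma cfConv_succ (a : ℕ → ℝ) (n : ℕ) :
    cfConv a (n + 1) = a 0 + 1 / cfConv (fun i => a (i + 1)) n := rfl

lemma cfApp_succ (a : ℕ → ℝ) (n : ℕ) (x : ℝ) :
    cfApp a (n + 1) x = a 0 + 1 / cfApp (fun i => a (i + 1)) n x := rfl

lemma cfConv_eq_app (n : ℕ) : ∀ a : ℕ → ℝ, cfConv a n = cfApp a n (a n) := by
  induction n with
  | zero => intro a; rfl
  | succ n ih => intro a; rw [cfConv_succ, cfApp_succ, ih]

def Ent (a : ℕ → ℝ) : Prop := ∀ n, 1 ≤ a n ∧ a n ≤ 2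

lemma Ent.tail {a : ℕ → ℝ} (h : Ent a) : Ent (fun i => a (i + 1)) := fun n => h (n + 1)

lemma cfApp_mem (n : ℕ) : ∀ (a : ℕ → ℝ) (x : ℝ), Ent a → 1 ≤ x → x ≤ 3 →
    1 ≤ cfApp a n x ∧ cfApp a n x ≤ 3 := by
  induction n with
  | zero => intro a x _ h1 h3; exact ⟨h1, h3⟩
  | succ n ih =>
    intro a x ha h1 h3
    obtain ⟨l, u⟩ := ih (fun i => a (i + 1)) x ha.tail h1 h3
    have h0 := ha 0
    rw [cfApp_succ]
    have hpos : (0:ℝ) < cfApp (fun i => a (i + 1)) n x := by linarith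
    constructor
    · have : 0 < 1 / cfApp (fun i => a (i + 1)) n x := by positivity
      linarith [h0.1]
    · have : 1 / cfApp (fun i => a (i + 1)) n x ≤ 1 := by
        rw [div_le_one hpos]; linarith
      linarith [h0.2]

lemma cfApp_lip (n : ℕ) : ∀ (a : ℕ → ℝ) (x y : ℝ), Ent a → 1 ≤ x → x ≤ 3 → 1 ≤ y → y ≤ 3 →
    |cfApp a n x - cfApp a n y| ≤ 2 * (1/2)^n * |x - y| := by
  induction n using Nat.strong_induction_on with
  | _ n ih =>
    match n with
    | 0 =>
      intro a x y _ _ _ _ _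
      simp [cfApp]
      nlinarith [abs_nonneg (x - y)]
    | 1 =>
      intro a x y ha hx1 hx3 hy1 hy3
      simp only [cfApp_succ, cfApp]
      have hx0 : x ≠ 0 := by linarith
      have hy0 : y ≠ 0 := by linarith
      have e : a 0 + 1/x - (a 0 + 1/y) = (y - x) / (x * y) := by field_simp; ring
      rw [e, abs_div]
      have h1 : |y - x| = |x - y| := abs_sub_comm _ _
      have h2 : |x * y| = x * y := abs_of_pos (by nlinarith)
      rw [h1, h2]
      rw [div_le_iff₀ (by nlinarith)]
      nlinarith [abs_nonneg (x - y), mul_nonneg (abs_nonneg (x - y)) (show (0:ℝ) ≤ x*y - 1 by nlinarith)]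
    | (m + 2) =>
      intro a x y ha hx1 hx3 hy1 hy3
      have hEnt2 : Ent (fun i => a (i + 2)) := fun i => ha (i + 2)
      have hum := cfApp_mem m (fun i => a (i + 2)) x hEnt2 hx1 hx3
      have hvm := cfApp_mem m (fun i => a (i + 2)) y hEnt2 hy1 hy3
      have hih := ih m (by omega) (fun i => a (i + 2)) x y hEnt2 hx1 hx3 hy1 hy3
      set u := cfApp (fun i => a (i + 2)) m x with hu
      set v := cfApp (fun i => a (i + 2)) m y with hv
      have ea : cfApp a (m + 2) x = a 0 + 1 / (a 1 + 1 / u) := rfl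
      have eb : cfApp a (m + 2) y = a 0 + 1 / (a 1 + 1 / v) := rfl
      rw [ea, eb]
      have h1 := ha 1
      have hupos : (0:ℝ) < u := by linarith [hum.1]
      have hvpos : (0:ℝ) < v := by linarith [hvm.1]
      have hu0 : u ≠ 0 := ne_of_gt hupos
      have hv0 : v ≠ 0 := ne_of_gt hvpos
      have hApos : (0:ℝ) < a 1 * u + 1 := by nlinarith [h1.1, hum.1]
      have hBpos : (0:ℝ) < a 1 * v + 1 := by nlinarith [h1.1, hvm.1]
      have hA0 : a 1 * u + 1 ≠ 0 := ne_of_gt hApos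
      have hB0 : a 1 * v + 1 ≠ 0 := ne_of_gt hBpos
      have hA0' : 1 + u * a 1 ≠ 0 := by intro h; apply hA0; linarith [h]
      have hB0' : 1 + v * a 1 ≠ 0 := by intro h; apply hB0; linarith [h]
      have hA0'' : 1 + a 1 * u ≠ 0 := by intro h; apply hA0; linarith [h]
      have hB0'' : 1 + a 1 * v ≠ 0 := by intro h; apply hB0; linarith [h]
      have hdu : a 1 + 1 / u ≠ 0 := by
        have : 0 < 1 / u := by positivity
        intro h; nlinarith [h1.1]
      have hdv : a 1 + 1 / v ≠ 0 := by
        have : 0 < 1 / v := by positivity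
        intro h; nlinarith [h1.1]
      have e : a 0 + 1 / (a 1 + 1 / u) - (a 0 + 1 / (a 1 + 1 / v))
          = (u - v) / ((a 1 * u + 1) * (a 1 * v + 1)) := by
        field_simp
        ring
      rw [e, abs_div]
      have hden : |(a 1 * u + 1) * (a 1 * v + 1)| = (a 1 * u + 1) * (a 1 * v + 1) :=
        abs_of_pos (by positivity)
      rw [hden]
      have h2a : (2:ℝ) ≤ a 1 * u + 1 := by nlinarith [h1.1, hum.1]
      have h2b : (2:ℝ) ≤ a 1 * v + 1 := by nlinarith [h1.1, hvm.1]
      have h4 : (4:ℝ) ≤ (a 1 * u + 1) * (a 1 * v + 1) := by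
        nlinarith [h2a, h2b, mul_nonneg (by linarith : (0:ℝ) ≤ a 1 * u + 1 - 2) (by linarith : (0:ℝ) ≤ a 1 * v + 1 - 2)]
      have hstep : |u - v| / ((a 1 * u + 1) * (a 1 * v + 1)) ≤ |u - v| / 4 :=
        div_le_div_of_nonneg_left (abs_nonneg _) (by norm_num) h4
      calc |u - v| / ((a 1 * u + 1) * (a 1 * v + 1)) ≤ |u - v| / 4 := hstep
        _ ≤ (2 * (1/2)^m * |x - y|) / 4 := by linarith [hih]
        _ = 2 * (1/2)^(m+2) * |x - y| := by ring


lemma cfConv_succ_app (n : ℕ) : ∀ a : ℕ → ℝ, cfConv a (n + 1) = cfApp a n (a n + 1 / a (n + 1)) := by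
  induction n with
  | zero => intro a; rfl
  | succ n ih =>
    intro a
    rw [cfConv_succ, ih (fun i => a (i + 1)), cfApp_succ]

lemma cfConv_mem (a : ℕ → ℝ) (ha : Ent a) (n : ℕ) : 1 ≤ cfConv a n ∧ cfConv a n ≤ 3 := by
  rw [cfConv_eq_app]
  exact cfApp_mem n a (a n) ha (ha n).1 (by linarith [(ha n).2])

lemma cfConv_cauchy (a : ℕ → ℝ) (ha : Ent a) : CauchySeq (cfConv a) := by
  apply cauchySeq_of_le_geometric (1/2 : ℝ) 2 (by norm_num)
  intro n
  rw [Real.dist_eq, cfConv_eq_app, cfConv_succ_app]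
  have h1 := ha n
  have h2 := ha (n + 1)
  have hy1 : 1 ≤ a n + 1 / a (n + 1) := by
    have : 0 < 1 / a (n + 1) := one_div_pos.mpr (by linarith [h2.1])
    linarith [h1.1]
  have hy3 : a n + 1 / a (n + 1) ≤ 3 := by
    have : 1 / a (n + 1) ≤ 1 := by rw [div_le_one (by linarith [h2.1])]; linarith [h2.1]
    linarith [h1.2]
  have := cfApp_lip n a (a n) (a n + 1 / a (n + 1)) ha h1.1 (by linarith [h1.2]) hy1 hy3
  have habs : |a n - (a n + 1 / a (n + 1))| = 1 / a (n + 1) := by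
    rw [show a n - (a n + 1 / a (n + 1)) = -(1 / a (n + 1)) by ring, abs_neg,
      abs_of_pos (one_div_pos.mpr (by linarith [h2.1]))]
  rw [habs] at this
  have : 2 * (1/2)^n * (1 / a (n + 1)) ≤ 2 * (1/2)^n := by
    have h01 : 1 / a (n + 1) ≤ 1 := by rw [div_le_one (by linarith [h2.1])]; linarith [h2.1]
    have : (0:ℝ) < 2 * (1/2)^n := by positivity
    nlinarith
  calc |cfApp a n (a n) - cfApp a n (a n + 1 / a (n + 1))| ≤ 2 * (1/2)^n * (1 / a (n + 1)) := by
        linarith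
    _ ≤ 2 * (1/2)^n := this

lemma tendsto_cfConv (a : ℕ → ℝ) (ha : Ent a) : Tendsto (cfConv a) atTop (𝓝 (cfVal a)) := by
  obtain ⟨L, hL⟩ := cauchySeq_tendsto_of_complete (cfConv_cauchy a ha)
  rwa [cfVal, hL.limUnder_eq]

lemma cfVal_mem (a : ℕ → ℝ) (ha : Ent a) : 1 ≤ cfVal a ∧ cfVal a ≤ 3 :=
  ⟨ge_of_tendsto' (tendsto_cfConv a ha) fun n => (cfConv_mem a ha n).1,
   le_of_tendsto' (tendsto_cfConv a ha) fun n => (cfConv_mem a ha n).2⟩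

lemma cfVal_head (a : ℕ → ℝ) (ha : Ent (fun i => a (i + 1))) :
    cfVal a = a 0 + 1 / cfVal (fun i => a (i + 1)) := by
  have ht := tendsto_cfConv _ ha
  have hpos : 1 ≤ cfVal (fun i => a (i + 1)) := (cfVal_mem _ ha).1
  have h2 : Tendsto (fun n => cfConv a (n + 1)) atTop
      (𝓝 (a 0 + 1 / cfVal (fun i => a (i + 1)))) := by
    simp only [cfConv_succ]
    exact tendsto_const_nhds.add (tendsto_const_nhds.div ht (by linarith))
  have h3 : Tendsto (cfConv a) atTop (𝓝 (a 0 + 1 / cfVal (fun i => a (i + 1)))) :=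
    (tendsto_add_atTop_iff_nat 1).mp h2
  rw [cfVal, h3.limUnder_eq]

lemma cfVal_bounds (a : ℕ → ℝ) (ha : Ent a) : 15/11 ≤ cfVal a ∧ cfVal a ≤ 41/15 := by
  have e0 : cfVal a = a 0 + 1 / cfVal (fun i => a (i + 1)) := cfVal_head a ha.tail
  have e1 : cfVal (fun i => a (i + 1)) = a 1 + 1 / cfVal (fun i => a (i + 2)) :=
    cfVal_head (fun i => a (i + 1)) (fun n => ha (n + 2))
  have e2 : cfVal (fun i => a (i + 2)) = a 2 + 1 / cfVal (fun i => a (i + 3)) :=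
    cfVal_head (fun i => a (i + 2)) (fun n => ha (n + 3))
  have e3 : cfVal (fun i => a (i + 3)) = a 3 + 1 / cfVal (fun i => a (i + 4)) :=
    cfVal_head (fun i => a (i + 3)) (fun n => ha (n + 4))
  have m4 := cfVal_mem (fun i => a (i + 4)) (fun n => ha (n + 4))
  set v4 := cfVal (fun i => a (i + 4))
  set v3 := cfVal (fun i => a (i + 3))
  set v2 := cfVal (fun i => a (i + 2))
  set v1 := cfVal (fun i => a (i + 1))
  have h0 := ha 0; have h1 := ha 1; have h2 := ha 2; have h3 := ha 3
  have hv4pos : (0:ℝ) < v4 := by linarith [m4.1]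
  -- v3 ∈ [4/3, 3]
  have i4a : 1/3 ≤ 1/v4 := by
    have := one_div_le_one_div_of_le hv4pos m4.2
    norm_num at this ⊢; linarith
  have i4b : 1/v4 ≤ 1 := by
    have := one_div_le_one_div_of_le one_pos m4.1
    norm_num at this ⊢; linarith
  have hv3a : 4/3 ≤ v3 := by rw [e3]; linarith [h3.1]
  have hv3b : v3 ≤ 3 := by rw [e3]; linarith [h3.2]
  have hv3pos : (0:ℝ) < v3 := by linarith
  have i3a : 1/3 ≤ 1/v3 := by
    have := one_div_le_one_div_of_le hv3pos hv3b
    norm_num at this ⊢; linarith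
  have i3b : 1/v3 ≤ 3/4 := by
    have := one_div_le_one_div_of_le (by norm_num : (0:ℝ) < 4/3) hv3a
    norm_num at this ⊢; linarith
  have hv2a : 4/3 ≤ v2 := by rw [e2]; linarith [h2.1]
  have hv2b : v2 ≤ 11/4 := by rw [e2]; linarith [h2.2]
  have hv2pos : (0:ℝ) < v2 := by linarith
  have i2a : 4/11 ≤ 1/v2 := by
    have := one_div_le_one_div_of_le hv2pos hv2b
    norm_num at this ⊢; linarith
  have i2b : 1/v2 ≤ 3/4 := by
    have := one_div_le_one_div_of_le (by norm_num : (0:ℝ) < 4/3) hv2a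
    norm_num at this ⊢; linarith
  have hv1a : 15/11 ≤ v1 := by rw [e1]; linarith [h1.1]
  have hv1b : v1 ≤ 11/4 := by rw [e1]; linarith [h1.2]
  have hv1pos : (0:ℝ) < v1 := by linarith
  have i1a : 4/11 ≤ 1/v1 := by
    have := one_div_le_one_div_of_le hv1pos hv1b
    norm_num at this ⊢; linarith
  have i1b : 1/v1 ≤ 11/15 := by
    have := one_div_le_one_div_of_le (by norm_num : (0:ℝ) < 15/11) hv1a
    norm_num at this ⊢; linarith
  rw [e0]
  constructor
  · linarith [h0.1]
  · linarith [h0.2]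


noncomputable def seq112 : ℕ → ℝ := fun n => if n % 3 = 2 then 2 else 1
noncomputable def seqB : ℕ → ℝ := fun n => if n % 3 = 1 then 2 else 1
noncomputable def seqC : ℕ → ℝ := fun n => if n % 3 = 0 then 2 else 1

lemma Ent_seq112 : Ent seq112 := fun n => by unfold seq112; split <;> norm_num
lemma Ent_seqB : Ent seqB := fun n => by unfold seqB; split <;> norm_num
lemma Ent_seqC : Ent seqC := fun n => by unfold seqC; split <;> norm_num

lemma tail_seq112 : (fun i => seq112 (i + 1)) = seqB := by
  funext i
  have h : ((i + 1) % 3 = 2) = (i % 3 = 1) := by simp only [eq_iff_iff]; omega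
  simp only [seq112, seqB, h]

lemma tail_seqB : (fun i => seqB (i + 1)) = seqC := by
  funext i
  have h : ((i + 1) % 3 = 1) = (i % 3 = 0) := by simp only [eq_iff_iff]; omega
  simp only [seqB, seqC, h]

lemma tail_seqC : (fun i => seqC (i + 1)) = seq112 := by
  funext i
  have h : ((i + 1) % 3 = 0) = (i % 3 = 2) := by simp only [eq_iff_iff]; omega
  simp only [seqC, seq112, h]

lemma sqrt10_lt : Real.sqrt 10 < 3.16228 := by
  nlinarith [Real.sq_sqrt (by norm_num : (0:ℝ) ≤ 10), Real.sqrt_nonneg 10]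

lemma sqrt10_gt : (3.16227:ℝ) < Real.sqrt 10 := by
  nlinarith [Real.sq_sqrt (by norm_num : (0:ℝ) ≤ 10), Real.sqrt_nonneg 10]

lemma eq112 : cfVal seq112 = 1 + 1 / cfVal seqB := by
  have h := cfVal_head seq112 (by rw [tail_seq112]; exact Ent_seqB)
  rw [tail_seq112] at h
  simpa [seq112] using h

lemma eqB : cfVal seqB = 1 + 1 / cfVal seqC := by
  have h := cfVal_head seqB (by rw [tail_seqB]; exact Ent_seqC)
  rw [tail_seqB] at h
  simpa [seqB] using h

lemma eqC : cfVal seqC = 2 + 1 / cfVal seq112 := by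
  have h := cfVal_head seqC (by rw [tail_seqC]; exact Ent_seq112)
  rw [tail_seqC] at h
  simpa [seqC] using h

lemma w_eq : cfVal seq112 = (2 + Real.sqrt 10) / 3 := by
  have mw := cfVal_mem seq112 Ent_seq112
  have m2 := cfVal_mem seqB Ent_seqB
  have m3 := cfVal_mem seqC Ent_seqC
  set w := cfVal seq112 with hw
  set v2 := cfVal seqB
  set v3 := cfVal seqC
  have h2 : v2 ≠ 0 := by intro h; rw [h] at m2; linarith [m2.1]
  have h3 : v3 ≠ 0 := by intro h; rw [h] at m3; linarith [m3.1]
  have h0 : w ≠ 0 := by intro h; rw [h] at mw; linarith [mw.1]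
  have E1 : w * v2 = v2 + 1 := by
    have := eq112; rw [← hw] at this; change w = 1 + 1 / v2 at this; field_simp at this; linarith [this]
  have E2 : v2 * v3 = v3 + 1 := by
    have := eqB; change v2 = 1 + 1 / v3 at this; field_simp at this; linarith [this]
  have E3 : v3 * w = 2 * w + 1 := by
    have := eqC; rw [← hw] at this; field_simp at this; linarith [this]
  have key : 3 * w ^ 2 - 4 * w - 2 = 0 := by
    linear_combination (w * v3) * E1 - (w * (w - 1)) * E2 + (2 - w) * E3
  have hsq : (3 * w - 2) ^ 2 = 10 := by nlinarith [key]
  have hpos : (0:ℝ) ≤ 3 * w - 2 := by linarith [mw.1]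
  have : Real.sqrt 10 = 3 * w - 2 := by rw [← hsq]; exact Real.sqrt_sq hpos
  linarith

lemma inv_w_eq : 1 / cfVal seq112 = (Real.sqrt 10 - 2) / 2 := by
  rw [w_eq]
  have h : (0:ℝ) < 2 + Real.sqrt 10 := by linarith [Real.sqrt_nonneg 10]
  have hs : Real.sqrt 10 ^ 2 = 10 := Real.sq_sqrt (by norm_num)
  rw [one_div, inv_div, div_eq_div_iff h.ne' (by norm_num : (2:ℝ) ≠ 0)]
  linear_combination (-1) * hs



def EntZ (α : ℤ → ℕ) : Prop := ∀ n, α n = 1 ∨ α n = 2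

noncomputable def vF (α : ℤ → ℕ) (j : ℤ) : ℝ := cfVal (fun n => (α (j + n) : ℝ))
noncomputable def vB (α : ℤ → ℕ) (j : ℤ) : ℝ := cfVal (fun n => (α (j - n) : ℝ))

lemma entF (α : ℤ → ℕ) (hα : EntZ α) (j : ℤ) : Ent (fun n : ℕ => (α (j + n) : ℝ)) := by
  intro n; rcases hα (j + n) with h | h <;> simp [h]

lemma entB (α : ℤ → ℕ) (hα : EntZ α) (j : ℤ) : Ent (fun n : ℕ => (α (j - n) : ℝ)) := by
  intro n; rcases hα (j - n) with h | h <;> simp [h]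

lemma vF_rec (α : ℤ → ℕ) (hα : EntZ α) (j : ℤ) :
    vF α j = (α j : ℝ) + 1 / vF α (j + 1) := by
  have hent : Ent (fun i : ℕ => ((α (j + (i + 1 : ℕ)) : ℕ) : ℝ)) := by
    intro n
    have h := hα (j + (n + 1 : ℕ))
    rw [show (j + ((n + 1 : ℕ) : ℤ)) = j + ((n : ℤ) + 1) from by push_cast; ring] at h
    rcases h with h | h <;> simp [h]
  have h := cfVal_head (fun n : ℕ => (α (j + n) : ℝ)) hent
  rw [vF, h]
  congr 1
  · norm_num
  · rw [vF]
    congr 2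
    funext i
    congr 2
    push_cast
    ring

lemma vB_rec (α : ℤ → ℕ) (hα : EntZ α) (j : ℤ) :
    vB α j = (α j : ℝ) + 1 / vB α (j - 1) := by
  have hent : Ent (fun i : ℕ => ((α (j - (i + 1 : ℕ)) : ℕ) : ℝ)) := by
    intro n
    have h := hα (j - (n + 1 : ℕ))
    rw [show (j - ((n + 1 : ℕ) : ℤ)) = j - ((n : ℤ) + 1) from by push_cast; ring] at h
    rcases h with h | h <;> simp [h]
  have h := cfVal_head (fun n : ℕ => (α (j - n) : ℝ)) hent
  rw [vB, h]
  congr 1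
  · norm_num
  · rw [vB]
    congr 2
    funext i
    congr 2
    push_cast
    ring

lemma vF_bounds (α : ℤ → ℕ) (hα : EntZ α) (j : ℤ) : 15/11 ≤ vF α j ∧ vF α j ≤ 41/15 :=
  cfVal_bounds _ (entF α hα j)

lemma vB_bounds (α : ℤ → ℕ) (hα : EntZ α) (j : ℤ) : 15/11 ≤ vB α j ∧ vB α j ≤ 41/15 :=
  cfVal_bounds _ (entB α hα j)

lemma inv_bounds {v : ℝ} (m : 15/11 ≤ v ∧ v ≤ 41/15) : 15/41 ≤ 1/v ∧ 1/v ≤ 11/15 := by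
  have hv : (0:ℝ) < v := by linarith [m.1]
  constructor
  · have := one_div_le_one_div_of_le hv m.2
    norm_num at this ⊢; linarith
  · have := one_div_le_one_div_of_le (by norm_num : (0:ℝ) < 15/11) m.1
    norm_num at this ⊢; linarith

lemma lambda_eq (α : ℤ → ℕ) (hα : EntZ α) (k : ℤ) :
    lambdaVal α k = vF α k + 1 / vB α (k - 1) := by
  have hent : Ent (fun i : ℕ => if (i + 1 : ℕ) = 0 then (0:ℝ) else (α (k - (i + 1 : ℕ)) : ℝ)) := by
    intro n
    have h := hα (k - (n + 1 : ℕ))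
    rw [show (k - ((n + 1 : ℕ) : ℤ)) = k - ((n : ℤ) + 1) from by push_cast; ring] at h
    rcases h with h | h <;> simp [h]
  have h := cfVal_head (fun n : ℕ => if n = 0 then (0:ℝ) else (α (k - n) : ℝ)) hent
  rw [lambdaVal, h]
  have e : (fun i : ℕ => (fun n : ℕ => if n = 0 then (0:ℝ) else (α (k - n) : ℝ)) (i + 1))
      = (fun n : ℕ => (α (k - 1 - n) : ℝ)) := by
    funext i
    have hne : (i + 1 : ℕ) ≠ 0 := Nat.succ_ne_zero i
    simp only [if_neg hne]
    congr 2
    push_cast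
    ring
  rw [e]
  norm_num [vF, vB]

lemma lambda_le (α : ℤ → ℕ) (hα : EntZ α) (k : ℤ) : lambdaVal α k ≤ 52/15 := by
  rw [lambda_eq α hα k]
  have h1 := vF_bounds α hα k
  have h2 := inv_bounds (vB_bounds α hα (k - 1))
  linarith [h1.2, h2.2]

lemma force_side (v1 v2 v3 v4 v5 : ℝ) (b2 b3 b4 : ℕ)
    (hb2 : b2 = 1 ∨ b2 = 2) (hb3 : b3 = 1 ∨ b3 = 2) (hb4 : b4 = 1 ∨ b4 = 2)
    (h1 : v1 = 1 + 1/v2) (h2 : v2 = (b2:ℝ) + 1/v3) (h3 : v3 = (b3:ℝ) + 1/v4)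
    (h4 : v4 = (b4:ℝ) + 1/v5)
    (m2 : 15/11 ≤ v2 ∧ v2 ≤ 41/15) (m3 : 15/11 ≤ v3 ∧ v3 ≤ 41/15)
    (m4 : 15/11 ≤ v4 ∧ v4 ≤ 41/15) (m5 : 15/11 ≤ v5 ∧ v5 ≤ 41/15)
    (hs : 1/v1 < Real.sqrt 10 - 2 - 15/26) :
    b2 = 1 ∧ b3 = 2 ∧ b4 = 1 := by
  have h10 := sqrt10_lt
  have i2 := inv_bounds m2
  have i3 := inv_bounds m3
  have i4 := inv_bounds m4
  have i5 := inv_bounds m5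
  have hv1pos : (0:ℝ) < v1 := by rw [h1]; linarith [i2.1]
  have hb2' : b2 = 1 := by
    rcases hb2 with e | e
    · exact e
    · exfalso
      have hv2 : (2:ℝ) ≤ v2 := by rw [h2, e]; push_cast; linarith [i3.1]
      have ha : 1/v2 ≤ 1/2 := one_div_le_one_div_of_le (by norm_num) hv2
      have hv1 : v1 ≤ 3/2 := by rw [h1]; linarith
      have hb : (2/3 : ℝ) ≤ 1/v1 := by
        rw [show (2/3 : ℝ) = 1/(3/2) from by norm_num]
        exact one_div_le_one_div_of_le hv1pos hv1
      linarith
  rw [hb2'] at h2; push_cast at h2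
  have hb3' : b3 = 2 := by
    rcases hb3 with e | e
    · exfalso
      rw [e] at h3; push_cast at h3
      have hv3 : v3 ≤ 26/15 := by rw [h3]; linarith [i4.2]
      have ha : (15/26 : ℝ) ≤ 1/v3 := by
        rw [show (15/26 : ℝ) = 1/(26/15) from by norm_num]
        exact one_div_le_one_div_of_le (by linarith [m3.1]) hv3
      have hv2 : 41/26 ≤ v2 := by rw [h2]; linarith
      have hbq : 1/v2 ≤ (26/41 : ℝ) := by
        rw [show (26/41 : ℝ) = 1/(41/26) from by norm_num]
        exact one_div_le_one_div_of_le (by norm_num) hv2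
      have hv1 : v1 ≤ 67/41 := by rw [h1]; linarith
      have hc : (41/67 : ℝ) ≤ 1/v1 := by
        rw [show (41/67 : ℝ) = 1/(67/41) from by norm_num]
        exact one_div_le_one_div_of_le hv1pos hv1
      linarith
    · exact e
  rw [hb3'] at h3; push_cast at h3
  have hb4' : b4 = 1 := by
    rcases hb4 with e | e
    · exact e
    · exfalso
      rw [e] at h4; push_cast at h4
      have hv4 : 97/41 ≤ v4 := by rw [h4]; linarith [i5.1]
      have ha : 1/v4 ≤ (41/97 : ℝ) := by
        rw [show (41/97 : ℝ) = 1/(97/41) from by norm_num]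
        exact one_div_le_one_div_of_le (by norm_num) hv4
      have hv3 : v3 ≤ 235/97 := by rw [h3]; linarith
      have hbq : (97/235 : ℝ) ≤ 1/v3 := by
        rw [show (97/235 : ℝ) = 1/(235/97) from by norm_num]
        exact one_div_le_one_div_of_le (by linarith [m3.1]) hv3
      have hv2 : 332/235 ≤ v2 := by rw [h2]; linarith
      have hc : 1/v2 ≤ (235/332 : ℝ) := by
        rw [show (235/332 : ℝ) = 1/(332/235) from by norm_num]
        exact one_div_le_one_div_of_le (by norm_num) hv2
      have hv1 : v1 ≤ 567/332 := by rw [h1]; linarith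
      have hd : (332/567 : ℝ) ≤ 1/v1 := by
        rw [show (332/567 : ℝ) = 1/(567/332) from by norm_num]
        exact one_div_le_one_div_of_le hv1pos hv1
      linarith
  exact ⟨hb2', hb3', hb4'⟩

lemma force (α : ℤ → ℕ) (hα : EntZ α) (k : ℤ)
    (hm1 : α (k - 1) = 1) (h0 : α k = 2) (hp1 : α (k + 1) = 1)
    (hlt : lambdaVal α k < Real.sqrt 10) :
    α (k + 2) = 1 ∧ α (k + 3) = 2 ∧ α (k + 4) = 1 ∧
    α (k - 2) = 1 ∧ α (k - 3) = 2 ∧ α (k - 4) = 1 := by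
  have rF1 : vF α (k + 1) = 1 + 1 / vF α (k + 2) := by
    have h := vF_rec α hα (k + 1)
    rw [hp1, show k + 1 + 1 = k + 2 from by ring] at h
    push_cast at h; exact h
  have rF2 : vF α (k + 2) = ((α (k + 2) : ℕ) : ℝ) + 1 / vF α (k + 3) := by
    have h := vF_rec α hα (k + 2)
    rwa [show k + 2 + 1 = k + 3 from by ring] at h
  have rF3 : vF α (k + 3) = ((α (k + 3) : ℕ) : ℝ) + 1 / vF α (k + 4) := by
    have h := vF_rec α hα (k + 3)
    rwa [show k + 3 + 1 = k + 4 from by ring] at h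
  have rF4 : vF α (k + 4) = ((α (k + 4) : ℕ) : ℝ) + 1 / vF α (k + 5) := by
    have h := vF_rec α hα (k + 4)
    rwa [show k + 4 + 1 = k + 5 from by ring] at h
  have rB1 : vB α (k - 1) = 1 + 1 / vB α (k - 2) := by
    have h := vB_rec α hα (k - 1)
    rw [hm1, show k - 1 - 1 = k - 2 from by ring] at h
    push_cast at h; exact h
  have rB2 : vB α (k - 2) = ((α (k - 2) : ℕ) : ℝ) + 1 / vB α (k - 3) := by
    have h := vB_rec α hα (k - 2)
    rwa [show k - 2 - 1 = k - 3 from by ring] at h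
  have rB3 : vB α (k - 3) = ((α (k - 3) : ℕ) : ℝ) + 1 / vB α (k - 4) := by
    have h := vB_rec α hα (k - 3)
    rwa [show k - 3 - 1 = k - 4 from by ring] at h
  have rB4 : vB α (k - 4) = ((α (k - 4) : ℕ) : ℝ) + 1 / vB α (k - 5) := by
    have h := vB_rec α hα (k - 4)
    rwa [show k - 4 - 1 = k - 5 from by ring] at h
  have hm : lambdaVal α k = 2 + 1 / vF α (k + 1) + 1 / vB α (k - 1) := by
    rw [lambda_eq α hα k, vF_rec α hα k, h0]
    push_cast; ring
  have mB1 := vB_bounds α hα (k - 1)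
  have mB2 := vB_bounds α hα (k - 2)
  have mB3 := vB_bounds α hα (k - 3)
  have mB4 := vB_bounds α hα (k - 4)
  have mB5 := vB_bounds α hα (k - 5)
  have mF1 := vF_bounds α hα (k + 1)
  have mF2 := vF_bounds α hα (k + 2)
  have mF3 := vF_bounds α hα (k + 3)
  have mF4 := vF_bounds α hα (k + 4)
  have mF5 := vF_bounds α hα (k + 5)
  -- lower bound for the backward contribution
  have hyB : 15/26 ≤ 1 / vB α (k - 1) := by
    have hv : vB α (k - 1) ≤ 26/15 := by rw [rB1]; linarith [(inv_bounds mB2).2]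
    rw [show (15/26 : ℝ) = 1/(26/15) from by norm_num]
    exact one_div_le_one_div_of_le (by linarith [mB1.1]) hv
  have hyF : 15/26 ≤ 1 / vF α (k + 1) := by
    have hv : vF α (k + 1) ≤ 26/15 := by rw [rF1]; linarith [(inv_bounds mF2).2]
    rw [show (15/26 : ℝ) = 1/(26/15) from by norm_num]
    exact one_div_le_one_div_of_le (by linarith [mF1.1]) hv
  have hsF : 1 / vF α (k + 1) < Real.sqrt 10 - 2 - 15/26 := by
    rw [hm] at hlt; linarith
  have hsB : 1 / vB α (k - 1) < Real.sqrt 10 - 2 - 15/26 := by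
    rw [hm] at hlt; linarith
  obtain ⟨c2, c3, c4⟩ := force_side (vF α (k+1)) (vF α (k+2)) (vF α (k+3)) (vF α (k+4))
    (vF α (k+5)) (α (k+2)) (α (k+3)) (α (k+4)) (hα _) (hα _) (hα _)
    rF1 rF2 rF3 rF4 mF2 mF3 mF4 mF5 hsF
  obtain ⟨d2, d3, d4⟩ := force_side (vB α (k-1)) (vB α (k-2)) (vB α (k-3)) (vB α (k-4))
    (vB α (k-5)) (α (k-2)) (α (k-3)) (α (k-4)) (hα _) (hα _) (hα _)
    rB1 rB2 rB3 rB4 mB2 mB3 mB4 mB5 hsB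
  exact ⟨c2, c3, c4, d2, d3, d4⟩

lemma cfValB_eq :
    cfVal (fun n : ℕ => if n = 0 then (0:ℝ) else if n % 3 = 0 then 2 else 1)
      = 1 / cfVal seq112 := by
  have hent : Ent (fun i : ℕ =>
      (fun n : ℕ => if n = 0 then (0:ℝ) else if n % 3 = 0 then 2 else 1) (i + 1)) := by
    intro n
    have hne : (n + 1 : ℕ) ≠ 0 := Nat.succ_ne_zero n
    simp only [if_neg hne]
    split <;> norm_num
  have h := cfVal_head (fun n : ℕ => if n = 0 then (0:ℝ) else if n % 3 = 0 then 2 else 1) hent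
  rw [h]
  have e : (fun i : ℕ =>
      (fun n : ℕ => if n = 0 then (0:ℝ) else if n % 3 = 0 then 2 else 1) (i + 1)) = seq112 := by
    funext i
    have hne : (i + 1 : ℕ) ≠ 0 := Nat.succ_ne_zero i
    simp only [if_neg hne, seq112]
    have hc : ((i + 1) % 3 = 0) = (i % 3 = 2) := by simp only [eq_iff_iff]; omega
    simp only [hc]
  rw [e]
  norm_num

lemma cfValA_eq :
    cfVal (fun n : ℕ => if n = 0 then (2:ℝ) else if n % 3 = 0 then 2 else 1)
      = 2 + 1 / cfVal seq112 := by
  have hA : (fun n : ℕ => if n = 0 then (2:ℝ) else if n % 3 = 0 then 2 else 1) = seqC := by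
    funext n
    by_cases h : n = 0
    · subst h; simp [seqC]
    · simp only [if_neg h, seqC]
  rw [hA, eqC]

lemma sum_eq_sqrt :
    cfVal (fun n : ℕ => if n = 0 then (2:ℝ) else if n % 3 = 0 then 2 else 1) +
      cfVal (fun n : ℕ => if n = 0 then (0:ℝ) else if n % 3 = 0 then 2 else 1)
      = Real.sqrt 10 := by
  rw [cfValA_eq, cfValB_eq, inv_w_eq]
  ring

lemma per112_ent : EntZ per112 := by
  intro n; unfold per112; split
  · right; rfl
  · left; rfl

lemma perF2 (k : ℤ) (h : k % 3 = 2) : (fun n : ℕ => ((per112 (k + n) : ℕ) : ℝ)) = seqC := by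
  funext n
  unfold per112 seqC
  have hc : ((k + (n : ℤ)) % 3 = 2) = ((n % 3 : ℕ) = 0) := by simp only [eq_iff_iff]; omega
  simp only [hc]
  split <;> norm_num

lemma perF1 (k : ℤ) (h : k % 3 = 1) : (fun n : ℕ => ((per112 (k + n) : ℕ) : ℝ)) = seqB := by
  funext n
  unfold per112 seqB
  have hc : ((k + (n : ℤ)) % 3 = 2) = ((n % 3 : ℕ) = 1) := by simp only [eq_iff_iff]; omega
  simp only [hc]
  split <;> norm_num

lemma perF0 (k : ℤ) (h : k % 3 = 0) : (fun n : ℕ => ((per112 (k + n) : ℕ) : ℝ)) = seq112 := by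
  funext n
  unfold per112 seq112
  have hc : ((k + (n : ℤ)) % 3 = 2) = ((n % 3 : ℕ) = 2) := by simp only [eq_iff_iff]; omega
  simp only [hc]
  split <;> norm_num

lemma perB2 (k : ℤ) (h : k % 3 = 2) : (fun n : ℕ => ((per112 (k - 1 - n) : ℕ) : ℝ)) = seq112 := by
  funext n
  unfold per112 seq112
  have hc : ((k - 1 - (n : ℤ)) % 3 = 2) = ((n % 3 : ℕ) = 2) := by simp only [eq_iff_iff]; omega
  simp only [hc]
  split <;> norm_num

lemma perB1 (k : ℤ) (h : k % 3 = 1) : (fun n : ℕ => ((per112 (k - 1 - n) : ℕ) : ℝ)) = seqB := by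
  funext n
  unfold per112 seqB
  have hc : ((k - 1 - (n : ℤ)) % 3 = 2) = ((n % 3 : ℕ) = 1) := by simp only [eq_iff_iff]; omega
  simp only [hc]
  split <;> norm_num

lemma perB0 (k : ℤ) (h : k % 3 = 0) : (fun n : ℕ => ((per112 (k - 1 - n) : ℕ) : ℝ)) = seqC := by
  funext n
  unfold per112 seqC
  have hc : ((k - 1 - (n : ℤ)) % 3 = 2) = ((n % 3 : ℕ) = 0) := by simp only [eq_iff_iff]; omega
  simp only [hc]
  split <;> norm_num

lemma lambda_per (k : ℤ) : lambdaVal per112 k ≤ Real.sqrt 10 := by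
  have hper := per112_ent
  have hsg := sqrt10_gt
  have mW := cfVal_bounds seq112 Ent_seq112
  have mB := cfVal_bounds seqB Ent_seqB
  have mC := cfVal_bounds seqC Ent_seqC
  have iW := inv_bounds mW
  have iB := inv_bounds mB
  have iC := inv_bounds mC
  rw [lambda_eq per112 hper k]
  have hres : k % 3 = 0 ∨ k % 3 = 1 ∨ k % 3 = 2 := by omega
  have hvF : vF per112 k = cfVal (fun n : ℕ => ((per112 (k + n) : ℕ) : ℝ)) := rfl
  have hvB : vB per112 (k - 1) = cfVal (fun n : ℕ => ((per112 (k - 1 - n) : ℕ) : ℝ)) := by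
    unfold vB
    congr 1
  rcases hres with h | h | h
  · rw [hvF, hvB, perF0 k h, perB0 k h, w_eq]
    linarith [iC.2]
  · have hB26 : cfVal seqB ≤ 26/15 := by rw [eqB]; linarith [iC.2]
    rw [hvF, hvB, perF1 k h, perB1 k h]
    linarith [hB26, iB.2]
  · rw [hvF, hvB, perF2 k h, perB2 k h, eqC, inv_w_eq]
    linarith

lemma lambda_per_two : lambdaVal per112 2 = Real.sqrt 10 := by
  have hper := per112_ent
  rw [lambda_eq per112 hper 2]
  have hvF : vF per112 2 = cfVal (fun n : ℕ => ((per112 (2 + n) : ℕ) : ℝ)) := rfl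
  have hvB : vB per112 (2 - 1) = cfVal (fun n : ℕ => ((per112 (2 - 1 - n) : ℕ) : ℝ)) := by
    unfold vB
    congr 1
  rw [hvF, hvB, perF2 2 (by decide), perB2 2 (by decide), eqC, inv_w_eq]
  ring

lemma markov_per : markovValue per112 = Real.sqrt 10 := by
  have hper := per112_ent
  have hBdd : BddAbove (Set.range (lambdaVal per112)) := by
    refine ⟨52/15, ?_⟩
    rintro x ⟨k, rfl⟩
    exact lambda_le per112 hper k
  apply le_antisymm
  · exact ciSup_le lambda_per
  · rw [← lambda_per_two]
    exact le_ciSup hBdd 2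

lemma main_lower (α : ℤ → ℕ) (hα : ∀ n, α n = 1 ∨ α n = 2) (hf : hasFactor α [1, 2, 1]) :
    Real.sqrt 10 ≤ markovValue α := by
  obtain ⟨j, hj⟩ := hf
  have h0 : α j = 1 := by have := hj ⟨0, by norm_num⟩; simpa using this
  have h1 : α (j + 1) = 2 := by have := hj ⟨1, by norm_num⟩; simpa using this
  have h2 : α (j + 2) = 1 := by have := hj ⟨2, by norm_num⟩; simpa using this
  by_contra hcon
  push_neg at hcon
  have hBdd : BddAbove (Set.range (lambdaVal α)) := by
    refine ⟨52/15, ?_⟩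
    rintro x ⟨k, rfl⟩
    exact lambda_le α hα k
  have hk : ∀ k, lambdaVal α k < Real.sqrt 10 := fun k =>
    lt_of_le_of_lt (le_ciSup hBdd k) hcon
  set k0 := j + 1 with hk0
  have b1 : α (k0 - 1) = 1 := by rw [show k0 - 1 = j from by rw [hk0]; ring]; exact h0
  have b2 : α k0 = 2 := h1
  have b3 : α (k0 + 1) = 1 := by rw [show k0 + 1 = j + 2 from by rw [hk0]; ring]; exact h2
  have C : ∀ m : ℕ,
      (α (k0 + 3*(m:ℤ) - 1) = 1 ∧ α (k0 + 3*(m:ℤ)) = 2 ∧ α (k0 + 3*(m:ℤ) + 1) = 1) ∧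
      (α (k0 - 3*(m:ℤ) - 1) = 1 ∧ α (k0 - 3*(m:ℤ)) = 2 ∧ α (k0 - 3*(m:ℤ) + 1) = 1) := by
    intro m
    induction m with
    | zero =>
      constructor
      · refine ⟨?_, ?_, ?_⟩
        · rw [show k0 + 3*((0:ℕ):ℤ) - 1 = k0 - 1 from by push_cast; ring]; exact b1
        · rw [show k0 + 3*((0:ℕ):ℤ) = k0 from by push_cast; ring]; exact b2
        · rw [show k0 + 3*((0:ℕ):ℤ) + 1 = k0 + 1 from by push_cast; ring]; exact b3
      · refine ⟨?_, ?_, ?_⟩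
        · rw [show k0 - 3*((0:ℕ):ℤ) - 1 = k0 - 1 from by push_cast; ring]; exact b1
        · rw [show k0 - 3*((0:ℕ):ℤ) = k0 from by push_cast; ring]; exact b2
        · rw [show k0 - 3*((0:ℕ):ℤ) + 1 = k0 + 1 from by push_cast; ring]; exact b3
    | succ m ih =>
      obtain ⟨⟨f1, f2, f3⟩, ⟨g1, g2, g3⟩⟩ := ih
      have hfor := force α hα (k0 + 3*(m:ℤ)) f1 f2 f3 (hk _)
      have hback := force α hα (k0 - 3*(m:ℤ)) g1 g2 g3 (hk _)
      constructor
      · refine ⟨?_, ?_, ?_⟩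
        · rw [show k0 + 3*((m+1:ℕ):ℤ) - 1 = k0 + 3*(m:ℤ) + 2 from by push_cast; ring]
          exact hfor.1
        · rw [show k0 + 3*((m+1:ℕ):ℤ) = k0 + 3*(m:ℤ) + 3 from by push_cast; ring]
          exact hfor.2.1
        · rw [show k0 + 3*((m+1:ℕ):ℤ) + 1 = k0 + 3*(m:ℤ) + 4 from by push_cast; ring]
          exact hfor.2.2.1
      · refine ⟨?_, ?_, ?_⟩
        · rw [show k0 - 3*((m+1:ℕ):ℤ) - 1 = k0 - 3*(m:ℤ) - 4 from by push_cast; ring]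
          exact hback.2.2.2.2.2
        · rw [show k0 - 3*((m+1:ℕ):ℤ) = k0 - 3*(m:ℤ) - 3 from by push_cast; ring]
          exact hback.2.2.2.2.1
        · rw [show k0 - 3*((m+1:ℕ):ℤ) + 1 = k0 - 3*(m:ℤ) - 2 from by push_cast; ring]
          exact hback.2.2.2.1
  have key : ∀ (q s : ℤ), s = -1 ∨ s = 0 ∨ s = 1 →
      α (k0 + 3*q + s) = if s = 0 then 2 else 1 := by
    intro q s hs
    rcases le_or_gt 0 q with hq | hq
    · obtain ⟨m, rfl⟩ := Int.eq_ofNat_of_zero_le hq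
      rcases hs with rfl | rfl | rfl
      · rw [show k0 + 3*((m:ℕ):ℤ) + (-1) = k0 + 3*((m:ℕ):ℤ) - 1 from by ring, (C m).1.1]
        norm_num
      · rw [show k0 + 3*((m:ℕ):ℤ) + 0 = k0 + 3*((m:ℕ):ℤ) from by ring, (C m).1.2.1]
        norm_num
      · rw [(C m).1.2.2]
        norm_num
    · have hm : (((-q).toNat : ℕ) : ℤ) = -q := Int.toNat_of_nonneg (by omega)
      rcases hs with rfl | rfl | rfl
      · rw [show k0 + 3*q + (-1) = k0 - 3*(((-q).toNat : ℕ) : ℤ) - 1 from by omega,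
          (C (-q).toNat).2.1]
        norm_num
      · rw [show k0 + 3*q + 0 = k0 - 3*(((-q).toNat : ℕ) : ℤ) from by omega,
          (C (-q).toNat).2.2.1]
        norm_num
      · rw [show k0 + 3*q + 1 = k0 - 3*(((-q).toNat : ℕ) : ℤ) + 1 from by omega,
          (C (-q).toNat).2.2.2]
        norm_num
  have hall : ∀ r : ℤ, α (k0 + r) = if r % 3 = 0 then 2 else 1 := by
    intro r
    have h3 : r % 3 = 0 ∨ r % 3 = 1 ∨ r % 3 = 2 := by omega
    rcases h3 with h | h | h
    · have hx := key (r/3) 0 (by norm_num)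
      rw [show k0 + 3*(r/3) + 0 = k0 + r from by omega] at hx
      rw [hx]
      simp [h]
    · have hx := key (r/3) 1 (by norm_num)
      rw [show k0 + 3*(r/3) + 1 = k0 + r from by omega] at hx
      rw [hx]
      simp [h]
    · have hx := key (r/3 + 1) (-1) (by norm_num)
      rw [show k0 + 3*(r/3 + 1) + (-1) = k0 + r from by omega] at hx
      rw [hx]
      simp [h]
  have hseqF : (fun n : ℕ => ((α (k0 + 1 + n) : ℕ) : ℝ)) = seq112 := by
    funext n
    have hx := hall (1 + n)
    rw [show k0 + (1 + (n:ℤ)) = k0 + 1 + n from by ring] at hx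
    rw [hx]
    by_cases h : n % 3 = 2
    · rw [if_pos (by omega : ((1:ℤ) + n) % 3 = 0)]
      simp [seq112, h]
    · rw [if_neg (by omega : ¬ ((1:ℤ) + n) % 3 = 0)]
      simp [seq112, h]
  have hseqB : (fun n : ℕ => ((α (k0 - 1 - n) : ℕ) : ℝ)) = seq112 := by
    funext n
    have hx := hall (-1 - n)
    rw [show k0 + (-1 - (n:ℤ)) = k0 - 1 - n from by ring] at hx
    rw [hx]
    by_cases h : n % 3 = 2
    · rw [if_pos (by omega : (-1 - (n:ℤ)) % 3 = 0)]
      simp [seq112, h]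
    · rw [if_neg (by omega : ¬ (-1 - (n:ℤ)) % 3 = 0)]
      simp [seq112, h]
  have hwF : vF α (k0 + 1) = cfVal seq112 := by
    unfold vF
    rw [hseqF]
  have hwB : vB α (k0 - 1) = cfVal seq112 := by
    unfold vB
    have : (fun n : ℕ => ((α (k0 - 1 - n) : ℕ) : ℝ)) = fun n : ℕ => ((α (k0 - 1 - n) : ℕ) : ℝ) := rfl
    rw [← hseqB]
  have hlam : lambdaVal α k0 = Real.sqrt 10 := by
    rw [lambda_eq α hα k0, vF_rec α hα k0, b2, hwF, hwB, inv_w_eq]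
    push_cast
    ring
  have := hk k0
  rw [hlam] at this
  exact lt_irrefl _ this

end CFAux

/-- Every `α ∈ {1,2}^ℤ` containing the factor `(1,2,1)` has Markov value at least
`√10`, attained by the periodic sequence of period `(1,1,2)`, whose Markov value
is `[2; \overline{1,1,2}] + [0; \overline{1,1,2}] = √10`. Thus `√10` is the smallest
Markov value among `{1,2}`-sequences containing the factor `(1,2,1)`. -/
theorem smallest_markov_value_with_121 :
    (∀ α : ℤ → ℕ, (∀ n, α n = 1 ∨ α n = 2) → hasFactor α [1, 2, 1] →
      Real.sqrt 10 ≤ markovValue α) ∧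
    (∀ n, per112 n = 1 ∨ per112 n = 2) ∧
    hasFactor per112 [1, 2, 1] ∧
    markovValue per112 =
      cfVal (fun n => if n = 0 then 2 else if n % 3 = 0 then 2 else 1) +
        cfVal (fun n => if n = 0 then 0 else if n % 3 = 0 then 2 else 1) ∧
    cfVal (fun n => if n = 0 then 2 else if n % 3 = 0 then 2 else 1) +
        cfVal (fun n => if n = 0 then 0 else if n % 3 = 0 then 2 else 1) =
      Real.sqrt 10 := by
  refine ⟨CFAux.main_lower, ?_, ?_, ?_, CFAux.sum_eq_sqrt⟩
  · intro n
    unfold per112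
    split
    · right; rfl
    · left; rfl
  · refine ⟨1, ?_⟩
    intro i
    fin_cases i <;> norm_num [per112]
  · rw [CFAux.markov_per, CFAux.sum_eq_sqrt]
end

section
/- Every bi-infinite sequence α ∈ {1,2}^ℤ that contains the word (2,1,2) as a factor satisfies m(α) ≥ √85/3, and the value √85/3 is attained: the periodic sequence of period (2,1,2), which contains the factor (2,1,2), has Markov value [2; \overline{1,2,2}] + [0; \overline{2,1,2}] = √85/3. Thus √85/3 is the smallest Markov value among {1,2}-sequences containing the factor (2,1,2). -/
open Filter Set MeasureTheory
open scoped ENNReal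

/-- The bi-infinite periodic sequence of period `(2,1,2)`. -/
def per212 : ℤ → ℕ := fun n => if n % 3 = 1 then 1 else 2

set_option maxHeartbeats 1000000

namespace CF212

def OneTwo (a : ℕ → ℝ) : Prop := ∀ n, 1 ≤ a n ∧ a n ≤ 2

lemma cfConv_succ (a : ℕ → ℝ) (n : ℕ) :
    cfConv a (n + 1) = a 0 + 1 / cfConv (fun i => a (i + 1)) n := rfl

lemma oneTwo_shift {a : ℕ → ℝ} (ha : OneTwo a) : OneTwo (fun i => a (i + 1)) :=
  fun n => ha (n + 1)

lemma cfConv_bounds {a : ℕ → ℝ} (ha : OneTwo a) : ∀ n, 1 ≤ cfConv a n ∧ cfConv a n ≤ 3 := by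
  intro n
  induction n generalizing a with
  | zero => exact ⟨(ha 0).1, le_trans (ha 0).2 (by norm_num)⟩
  | succ n ih =>
    obtain ⟨h1, h3⟩ := ih (oneTwo_shift ha)
    rw [cfConv_succ]
    have hpos : (0:ℝ) < cfConv (fun i => a (i+1)) n := by linarith
    constructor
    · have : 0 ≤ 1 / cfConv (fun i => a (i+1)) n := by positivity
      linarith [(ha 0).1]
    · have : 1 / cfConv (fun i => a (i+1)) n ≤ 1 := by
        rw [div_le_one hpos]; linarith
      linarith [(ha 0).2]

lemma cfConv_pos {a : ℕ → ℝ} (ha : OneTwo a) (n : ℕ) : 0 < cfConv a n :=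
  lt_of_lt_of_le one_pos (cfConv_bounds ha n).1

lemma cfConv_succ_ge {a : ℕ → ℝ} (ha : OneTwo a) (n : ℕ) : 4/3 ≤ cfConv a (n + 1) := by
  rw [cfConv_succ]
  obtain ⟨h1, h3⟩ := cfConv_bounds (oneTwo_shift ha) n
  have : (1:ℝ)/3 ≤ 1 / cfConv (fun i => a (i+1)) n :=
    one_div_le_one_div_of_le (by linarith) h3
  linarith [(ha 0).1]

lemma cfConv_diff {a : ℕ → ℝ} (ha : OneTwo a) :
    ∀ n, |cfConv a (n + 1) - cfConv a n| ≤ (3/4) ^ n := by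
  intro n
  induction n generalizing a with
  | zero =>
    simp only [pow_zero]
    have h0 : cfConv a 0 = a 0 := rfl
    have h1 : cfConv a 1 = a 0 + 1 / cfConv (fun i => a (i+1)) 0 := rfl
    have hc : cfConv (fun i => a (i+1)) 0 = a 1 := rfl
    rw [h0, h1, hc]
    have h1a := (ha 1).1
    have : |1 / a 1| = 1 / a 1 := abs_of_nonneg (by positivity)
    rw [add_sub_cancel_left, this, div_le_one (by linarith)]
    linarith
  | succ n ih =>
    have ih' := ih (oneTwo_shift ha)
    set x := cfConv (fun i => a (i+1)) (n + 1) with hx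
    set y := cfConv (fun i => a (i+1)) n with hy
    have hxg : 4/3 ≤ x := cfConv_succ_ge (oneTwo_shift ha) n
    have hyg : 1 ≤ y := (cfConv_bounds (oneTwo_shift ha) n).1
    have hxpos : (0:ℝ) < x := by linarith
    have hypos : (0:ℝ) < y := by linarith
    have e : cfConv a (n + 2) - cfConv a (n + 1) = (y - x) / (x * y) := by
      rw [cfConv_succ a (n+1), cfConv_succ a n, ← hx, ← hy]
      field_simp
      ring
    rw [e, abs_div, abs_of_pos (mul_pos hxpos hypos)]
    have hxy : 4/3 ≤ x * y := by nlinarith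
    have : |y - x| / (x * y) ≤ |y - x| * (3/4) := by
      rw [div_le_iff₀ (by linarith)]
      nlinarith [abs_nonneg (y - x)]
    have h2 : |y - x| ≤ (3/4) ^ n := by rw [abs_sub_comm]; exact ih'
    calc |y - x| / (x * y) ≤ |y - x| * (3/4) := this
      _ ≤ (3/4)^n * (3/4) := by nlinarith [abs_nonneg (y-x)]
      _ = (3/4)^(n+1) := by ring

lemma cfConv_cauchy {a : ℕ → ℝ} (ha : OneTwo a) : CauchySeq (cfConv a) := by
  apply cauchySeq_of_le_geometric (3/4) 1 (by norm_num)
  intro n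
  rw [Real.dist_eq, abs_sub_comm, one_mul]
  exact cfConv_diff ha n

lemma tendsto_cfVal {a : ℕ → ℝ} (ha : OneTwo a) :
    Tendsto (cfConv a) atTop (nhds (cfVal a)) := by
  obtain ⟨L, hL⟩ := cauchySeq_tendsto_of_complete (cfConv_cauchy ha)
  rw [cfVal, hL.limUnder_eq]
  exact hL

lemma cfVal_bounds {a : ℕ → ℝ} (ha : OneTwo a) : 1 ≤ cfVal a ∧ cfVal a ≤ 3 := by
  constructor
  · exact ge_of_tendsto (tendsto_cfVal ha) (Eventually.of_forall fun n => (cfConv_bounds ha n).1)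
  · exact le_of_tendsto (tendsto_cfVal ha) (Eventually.of_forall fun n => (cfConv_bounds ha n).2)

lemma cfVal_rec {a : ℕ → ℝ} (ha : OneTwo a) :
    cfVal a = a 0 + 1 / cfVal (fun i => a (i + 1)) := by
  have hs := tendsto_cfVal (oneTwo_shift ha)
  have hne : cfVal (fun i => a (i+1)) ≠ 0 := by
    have := (cfVal_bounds (oneTwo_shift ha)).1; linarith
  have h1 : Tendsto (fun n => cfConv a (n + 1)) atTop
      (nhds (a 0 + 1 / cfVal (fun i => a (i + 1)))) := by
    simp only [cfConv_succ]
    exact tendsto_const_nhds.add ((tendsto_const_nhds).div hs hne)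
  have h2 : Tendsto (fun n => cfConv a (n + 1)) atTop (nhds (cfVal a)) :=
    (tendsto_cfVal ha).comp (tendsto_add_atTop_nat 1)
  exact tendsto_nhds_unique h2 h1

lemma cfVal_zero_rec {a : ℕ → ℝ} (h0 : a 0 = 0) (ha : OneTwo (fun i => a (i + 1))) :
    cfVal a = 1 / cfVal (fun i => a (i + 1)) := by
  have hs := tendsto_cfVal ha
  have hne : cfVal (fun i => a (i+1)) ≠ 0 := by
    have := (cfVal_bounds ha).1; linarith
  have h1 : Tendsto (fun n => cfConv a (n + 1)) atTop
      (nhds (1 / cfVal (fun i => a (i + 1)))) := by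
    simp only [cfConv_succ, h0, zero_add]
    exact (tendsto_const_nhds).div hs hne
  have h2 : Tendsto (cfConv a) atTop (nhds (1 / cfVal (fun i => a (i + 1)))) :=
    (tendsto_add_atTop_iff_nat 1).mp h1
  rw [cfVal, h2.limUnder_eq]

end CF212

namespace CF212

noncomputable def Fv (α : ℤ → ℕ) (k : ℤ) : ℝ := cfVal (fun n => (α (k + n) : ℝ))

noncomputable def Rv (α : ℤ → ℕ) (k : ℤ) : ℝ := cfVal (fun n => (α (k - n) : ℝ))

variable {α : ℤ → ℕ}

section
variable (hα : ∀ n, α n = 1 ∨ α n = 2)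
include hα

lemma oneTwo_fwd (k : ℤ) : OneTwo (fun n => (α (k + n) : ℝ)) := by
  intro n
  rcases hα (k + n) with h | h <;> simp [h]

lemma oneTwo_bwd (k : ℤ) : OneTwo (fun n => (α (k - n) : ℝ)) := by
  intro n
  rcases hα (k - n) with h | h <;> simp [h]

lemma Fv_rec (k : ℤ) : Fv α k = (α k : ℝ) + 1 / Fv α (k + 1) := by
  have h := cfVal_rec (oneTwo_fwd hα k)
  have e1 : (fun i : ℕ => (α (k + (i + 1 : ℕ)) : ℝ)) = fun n : ℕ => (α ((k + 1) + n) : ℝ) := by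
    funext n; congr 2; push_cast; ring
  rw [Fv, h, e1]
  norm_num [Fv]

lemma Rv_rec (k : ℤ) : Rv α k = (α k : ℝ) + 1 / Rv α (k - 1) := by
  have h := cfVal_rec (oneTwo_bwd hα k)
  have e1 : (fun i : ℕ => (α (k - (i + 1 : ℕ)) : ℝ)) = fun n : ℕ => (α ((k - 1) - n) : ℝ) := by
    funext n; congr 2; push_cast; ring
  rw [Rv, h, e1]
  norm_num [Rv]

lemma Fv_bounds0 (k : ℤ) : 1 ≤ Fv α k ∧ Fv α k ≤ 3 := cfVal_bounds (oneTwo_fwd hα k)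

lemma Rv_bounds0 (k : ℤ) : 1 ≤ Rv α k ∧ Rv α k ≤ 3 := cfVal_bounds (oneTwo_bwd hα k)

lemma digit_cast (k : ℤ) : 1 ≤ (α k : ℝ) ∧ (α k : ℝ) ≤ 2 := by
  rcases hα k with h | h <;> rw [h] <;> norm_num

lemma Fv_bounds1 (k : ℤ) : 4/3 ≤ Fv α k ∧ Fv α k ≤ 11/4 := by
  have h0 := Fv_bounds0 hα (k + 1)
  have h1 := Fv_bounds0 hα (k + 2)
  have e0 := Fv_rec hα k
  have e1 := Fv_rec hα (k + 1)
  have d0 := digit_cast hα k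
  have d1 := digit_cast hα (k + 1)
  have hk2 : 4/3 ≤ Fv α (k + 1) := by
    rw [show k + 1 + 1 = k + 2 by ring] at e1
    have : (1:ℝ)/3 ≤ 1 / Fv α (k + 2) := one_div_le_one_div_of_le (by linarith [h1.1]) h1.2
    rw [e1]; linarith [d1.1]
  constructor
  · have : (1:ℝ)/3 ≤ 1 / Fv α (k + 1) := one_div_le_one_div_of_le (by linarith [h0.1]) h0.2
    rw [e0]; linarith [d0.1]
  · have : 1 / Fv α (k + 1) ≤ 3/4 := by
      rw [div_le_iff₀ (by linarith [h0.1])]; linarith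
    rw [e0]; linarith [d0.2]

lemma Fv_bounds (k : ℤ) : 15/11 ≤ Fv α k ∧ Fv α k ≤ 11/4 := by
  have h0 := Fv_bounds1 hα (k + 1)
  have e0 := Fv_rec hα k
  have d0 := digit_cast hα k
  constructor
  · have : (4:ℝ)/11 ≤ 1 / Fv α (k + 1) := by
      rw [le_div_iff₀ (by linarith [h0.1])]; linarith [h0.2]
    rw [e0]; linarith [d0.1]
  · exact (Fv_bounds1 hα k).2

lemma Rv_bounds1 (k : ℤ) : 4/3 ≤ Rv α k ∧ Rv α k ≤ 11/4 := by
  have h0 := Rv_bounds0 hα (k - 1)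
  have h1 := Rv_bounds0 hα (k - 2)
  have e0 := Rv_rec hα k
  have e1 := Rv_rec hα (k - 1)
  have d0 := digit_cast hα k
  have d1 := digit_cast hα (k - 1)
  have hk2 : 4/3 ≤ Rv α (k - 1) := by
    rw [show k - 1 - 1 = k - 2 by ring] at e1
    have : (1:ℝ)/3 ≤ 1 / Rv α (k - 2) := one_div_le_one_div_of_le (by linarith [h1.1]) h1.2
    rw [e1]; linarith [d1.1]
  constructor
  · have : (1:ℝ)/3 ≤ 1 / Rv α (k - 1) := one_div_le_one_div_of_le (by linarith [h0.1]) h0.2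
    rw [e0]; linarith [d0.1]
  · have : 1 / Rv α (k - 1) ≤ 3/4 := by
      rw [div_le_iff₀ (by linarith [h0.1])]; linarith
    rw [e0]; linarith [d0.2]

lemma Rv_bounds (k : ℤ) : 15/11 ≤ Rv α k ∧ Rv α k ≤ 11/4 := by
  have h0 := Rv_bounds1 hα (k - 1)
  have e0 := Rv_rec hα k
  have d0 := digit_cast hα k
  constructor
  · have : (4:ℝ)/11 ≤ 1 / Rv α (k - 1) := by
      rw [le_div_iff₀ (by linarith [h0.1])]; linarith [h0.2]
    rw [e0]; linarith [d0.1]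
  · exact (Rv_bounds1 hα k).2

lemma lambdaVal_eq (k : ℤ) : lambdaVal α k = Fv α k + 1 / Rv α (k - 1) := by
  have h0 : (fun n : ℕ => if n = 0 then (0:ℝ) else (α (k - n) : ℝ)) 0 = 0 := rfl
  have hs : (fun i : ℕ => (fun n : ℕ => if n = 0 then (0:ℝ) else (α (k - n) : ℝ)) (i + 1)) =
      fun n : ℕ => (α ((k - 1) - n) : ℝ) := by
    funext n
    simp only [Nat.succ_ne_zero, if_false]
    congr 2
    push_cast; ring
  have := cfVal_zero_rec (a := fun n : ℕ => if n = 0 then (0:ℝ) else (α (k - n) : ℝ)) h0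
    (by rw [hs]; exact oneTwo_bwd hα (k - 1))
  rw [lambdaVal, this, hs]
  rfl

end
end CF212

namespace CF212
section
variable {α : ℤ → ℕ} (hα : ∀ n, α n = 1 ∨ α n = 2)
include hα

lemma lamA (k : ℤ) (h0 : α k = 2) (h1 : α (k+1) = 1) (h2 : α (k+2) = 2)
    (hm1 : α (k-1) = 1) : Real.sqrt 85 / 3 < lambdaVal α k := by
  have b3 := Fv_bounds hα (k+3)
  have b2 := Fv_bounds hα (k+2)
  have b1 := Fv_bounds hα (k+1)
  have bR1 := Rv_bounds hα (k-1)
  have bR2 := Rv_bounds hα (k-2)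
  have e2 := Fv_rec hα (k+2); rw [show k+2+1 = k+3 by ring, h2] at e2
  have e1 := Fv_rec hα (k+1); rw [show k+1+1 = k+2 by ring, h1] at e1
  have e0 := Fv_rec hα k; rw [h0] at e0
  have eR := Rv_rec hα (k-1); rw [show k-1-1 = k-2 by ring, hm1] at eR
  push_cast at e2 e1 e0 eR
  have hF2 : (26:ℝ)/11 ≤ Fv α (k+2) := by
    have : (4:ℝ)/11 ≤ 1 / Fv α (k+3) := by
      rw [le_div_iff₀ (by linarith [b3.1])]; linarith [b3.2]
    rw [e2]; linarith
  have hF1 : Fv α (k+1) ≤ 37/26 := by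
    have : 1 / Fv α (k+2) ≤ 11/26 := by
      rw [div_le_iff₀ (by linarith [b2.1])]; linarith
    rw [e1]; linarith
  have hF0 : (100:ℝ)/37 ≤ Fv α k := by
    have : (26:ℝ)/37 ≤ 1 / Fv α (k+1) := by
      rw [le_div_iff₀ (by linarith [b1.1])]; linarith
    rw [e0]; linarith
  have hR : Rv α (k-1) ≤ 26/15 := by
    have : 1 / Rv α (k-2) ≤ 11/15 := by
      rw [div_le_iff₀ (by linarith [bR2.1])]; linarith [bR2.1]
    rw [eR]; linarith
  have hRi : (15:ℝ)/26 ≤ 1 / Rv α (k-1) := by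
    rw [le_div_iff₀ (by linarith [bR1.1])]; linarith
  rw [lambdaVal_eq hα]
  have hsq : Real.sqrt 85 < 3 * (100/37 + 15/26) := by
    rw [show (3:ℝ) * (100/37+15/26) = 9465/962 by norm_num, Real.sqrt_lt' (by norm_num)]
    norm_num
  linarith

lemma lamB (k : ℤ) (h0 : α k = 2) (h1 : α (k+1) = 1) (h2 : α (k+2) = 2)
    (h3 : α (k+3) = 1) : Real.sqrt 85 / 3 < lambdaVal α k := by
  have b4 := Fv_bounds hα (k+4)
  have b3 := Fv_bounds hα (k+3)
  have b2 := Fv_bounds hα (k+2)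
  have b1 := Fv_bounds hα (k+1)
  have bR1 := Rv_bounds hα (k-1)
  have e3 := Fv_rec hα (k+3); rw [show k+3+1 = k+4 by ring, h3] at e3
  have e2 := Fv_rec hα (k+2); rw [show k+2+1 = k+3 by ring, h2] at e2
  have e1 := Fv_rec hα (k+1); rw [show k+1+1 = k+2 by ring, h1] at e1
  have e0 := Fv_rec hα k; rw [h0] at e0
  push_cast at e3 e2 e1 e0
  have hF3 : Fv α (k+3) ≤ 26/15 := by
    have : 1 / Fv α (k+4) ≤ 11/15 := by
      rw [div_le_iff₀ (by linarith [b4.1])]; linarith [b4.1]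
    rw [e3]; linarith
  have hF2 : (67:ℝ)/26 ≤ Fv α (k+2) := by
    have : (15:ℝ)/26 ≤ 1 / Fv α (k+3) := by
      rw [le_div_iff₀ (by linarith [b3.1])]; linarith
    rw [e2]; linarith
  have hF1 : Fv α (k+1) ≤ 93/67 := by
    have : 1 / Fv α (k+2) ≤ 26/67 := by
      rw [div_le_iff₀ (by linarith [b2.1])]; linarith
    rw [e1]; linarith
  have hF0 : (253:ℝ)/93 ≤ Fv α k := by
    have : (67:ℝ)/93 ≤ 1 / Fv α (k+1) := by
      rw [le_div_iff₀ (by linarith [b1.1])]; linarith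
    rw [e0]; linarith
  have hRi : (4:ℝ)/11 ≤ 1 / Rv α (k-1) := by
    rw [le_div_iff₀ (by linarith [bR1.1])]; linarith [bR1.2]
  rw [lambdaVal_eq hα]
  have hsq : Real.sqrt 85 < 3 * (253/93 + 4/11) := by
    rw [show (3:ℝ) * (253/93+4/11) = 3155/341 by norm_num, Real.sqrt_lt' (by norm_num)]
    norm_num
  linarith

lemma lamI (k : ℤ) (h0 : α k = 2) (h1 : α (k+1) = 2) (h2 : α (k+2) = 2)
    (hm1 : α (k-1) = 1) (hm2 : α (k-2) = 2) (hm3 : α (k-3) = 2) :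
    Real.sqrt 85 / 3 < lambdaVal α k := by
  have b3 := Fv_bounds hα (k+3)
  have b2 := Fv_bounds hα (k+2)
  have b1 := Fv_bounds hα (k+1)
  have bR1 := Rv_bounds hα (k-1)
  have bR2 := Rv_bounds hα (k-2)
  have bR3 := Rv_bounds hα (k-3)
  have bR4 := Rv_bounds hα (k-4)
  have e2 := Fv_rec hα (k+2); rw [show k+2+1 = k+3 by ring, h2] at e2
  have e1 := Fv_rec hα (k+1); rw [show k+1+1 = k+2 by ring, h1] at e1
  have e0 := Fv_rec hα k; rw [h0] at e0
  have eR1 := Rv_rec hα (k-1); rw [show k-1-1 = k-2 by ring, hm1] at eR1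
  have eR2 := Rv_rec hα (k-2); rw [show k-2-1 = k-3 by ring, hm2] at eR2
  have eR3 := Rv_rec hα (k-3); rw [show k-3-1 = k-4 by ring, hm3] at eR3
  push_cast at e2 e1 e0 eR1 eR2 eR3
  have hF2 : (26:ℝ)/11 ≤ Fv α (k+2) := by
    have : (4:ℝ)/11 ≤ 1 / Fv α (k+3) := by
      rw [le_div_iff₀ (by linarith [b3.1])]; linarith [b3.2]
    rw [e2]; linarith
  have hF1 : Fv α (k+1) ≤ 63/26 := by
    have : 1 / Fv α (k+2) ≤ 11/26 := by
      rw [div_le_iff₀ (by linarith [b2.1])]; linarith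
    rw [e1]; linarith
  have hF0 : (152:ℝ)/63 ≤ Fv α k := by
    have : (26:ℝ)/63 ≤ 1 / Fv α (k+1) := by
      rw [le_div_iff₀ (by linarith [b1.1])]; linarith
    rw [e0]; linarith
  have hR3 : Rv α (k-3) ≤ 41/15 := by
    have : 1 / Rv α (k-4) ≤ 11/15 := by
      rw [div_le_iff₀ (by linarith [bR4.1])]; linarith [bR4.1]
    rw [eR3]; linarith
  have hR2 : (97:ℝ)/41 ≤ Rv α (k-2) := by
    have : (15:ℝ)/41 ≤ 1 / Rv α (k-3) := by
      rw [le_div_iff₀ (by linarith [bR3.1])]; linarith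
    rw [eR2]; linarith
  have hR1 : Rv α (k-1) ≤ 138/97 := by
    have : 1 / Rv α (k-2) ≤ 41/97 := by
      rw [div_le_iff₀ (by linarith [bR2.1])]; linarith
    rw [eR1]; linarith
  have hRi : (97:ℝ)/138 ≤ 1 / Rv α (k-1) := by
    rw [le_div_iff₀ (by linarith [bR1.1])]; linarith
  rw [lambdaVal_eq hα]
  have hsq : Real.sqrt 85 < 3 * (152/63 + 97/138) := by
    rw [show (3:ℝ) * (152/63+97/138) = 27087/2898 by norm_num, Real.sqrt_lt' (by norm_num)]
    norm_num
  linarith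

lemma lamIIb (k : ℤ) (h0 : α k = 2) (h1 : α (k+1) = 2) (h2 : α (k+2) = 1)
    (h3 : α (k+3) = 1) (hm1 : α (k-1) = 1) (hm2 : α (k-2) = 2) (hm3 : α (k-3) = 2) :
    Real.sqrt 85 / 3 < lambdaVal α k := by
  have b4 := Fv_bounds hα (k+4)
  have b3 := Fv_bounds hα (k+3)
  have b2 := Fv_bounds hα (k+2)
  have b1 := Fv_bounds hα (k+1)
  have bR1 := Rv_bounds hα (k-1)
  have bR2 := Rv_bounds hα (k-2)
  have bR3 := Rv_bounds hα (k-3)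
  have bR4 := Rv_bounds hα (k-4)
  have e3 := Fv_rec hα (k+3); rw [show k+3+1 = k+4 by ring, h3] at e3
  have e2 := Fv_rec hα (k+2); rw [show k+2+1 = k+3 by ring, h2] at e2
  have e1 := Fv_rec hα (k+1); rw [show k+1+1 = k+2 by ring, h1] at e1
  have e0 := Fv_rec hα k; rw [h0] at e0
  have eR1 := Rv_rec hα (k-1); rw [show k-1-1 = k-2 by ring, hm1] at eR1
  have eR2 := Rv_rec hα (k-2); rw [show k-2-1 = k-3 by ring, hm2] at eR2
  have eR3 := Rv_rec hα (k-3); rw [show k-3-1 = k-4 by ring, hm3] at eR3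
  push_cast at e3 e2 e1 e0 eR1 eR2 eR3
  have hF3 : Fv α (k+3) ≤ 26/15 := by
    have : 1 / Fv α (k+4) ≤ 11/15 := by
      rw [div_le_iff₀ (by linarith [b4.1])]; linarith [b4.1]
    rw [e3]; linarith
  have hF2 : (41:ℝ)/26 ≤ Fv α (k+2) := by
    have : (15:ℝ)/26 ≤ 1 / Fv α (k+3) := by
      rw [le_div_iff₀ (by linarith [b3.1])]; linarith
    rw [e2]; linarith
  have hF1 : Fv α (k+1) ≤ 108/41 := by
    have : 1 / Fv α (k+2) ≤ 26/41 := by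
      rw [div_le_iff₀ (by linarith [b2.1])]; linarith
    rw [e1]; linarith
  have hF0 : (257:ℝ)/108 ≤ Fv α k := by
    have : (41:ℝ)/108 ≤ 1 / Fv α (k+1) := by
      rw [le_div_iff₀ (by linarith [b1.1])]; linarith
    rw [e0]; linarith
  have hR3 : Rv α (k-3) ≤ 41/15 := by
    have : 1 / Rv α (k-4) ≤ 11/15 := by
      rw [div_le_iff₀ (by linarith [bR4.1])]; linarith [bR4.1]
    rw [eR3]; linarith
  have hR2 : (97:ℝ)/41 ≤ Rv α (k-2) := by
    have : (15:ℝ)/41 ≤ 1 / Rv α (k-3) := by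
      rw [le_div_iff₀ (by linarith [bR3.1])]; linarith
    rw [eR2]; linarith
  have hR1 : Rv α (k-1) ≤ 138/97 := by
    have : 1 / Rv α (k-2) ≤ 41/97 := by
      rw [div_le_iff₀ (by linarith [bR2.1])]; linarith
    rw [eR1]; linarith
  have hRi : (97:ℝ)/138 ≤ 1 / Rv α (k-1) := by
    rw [le_div_iff₀ (by linarith [bR1.1])]; linarith
  rw [lambdaVal_eq hα]
  have hsq : Real.sqrt 85 < 3 * (257/108 + 97/138) := by
    rw [show (3:ℝ) * (257/108+97/138) = 7657/828 by norm_num, Real.sqrt_lt' (by norm_num)]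
    norm_num
  linarith

lemma lamI' (k : ℤ) (h0 : α k = 2) (h1 : α (k+1) = 1) (h2 : α (k+2) = 2)
    (h3 : α (k+3) = 2) (hm1 : α (k-1) = 2) (hm2 : α (k-2) = 2) :
    Real.sqrt 85 / 3 < lambdaVal α k := by
  have b4 := Fv_bounds hα (k+4)
  have b3 := Fv_bounds hα (k+3)
  have b2 := Fv_bounds hα (k+2)
  have b1 := Fv_bounds hα (k+1)
  have bR1 := Rv_bounds hα (k-1)
  have bR2 := Rv_bounds hα (k-2)
  have bR3 := Rv_bounds hα (k-3)
  have e3 := Fv_rec hα (k+3); rw [show k+3+1 = k+4 by ring, h3] at e3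
  have e2 := Fv_rec hα (k+2); rw [show k+2+1 = k+3 by ring, h2] at e2
  have e1 := Fv_rec hα (k+1); rw [show k+1+1 = k+2 by ring, h1] at e1
  have e0 := Fv_rec hα k; rw [h0] at e0
  have eR1 := Rv_rec hα (k-1); rw [show k-1-1 = k-2 by ring, hm1] at eR1
  have eR2 := Rv_rec hα (k-2); rw [show k-2-1 = k-3 by ring, hm2] at eR2
  push_cast at e3 e2 e1 e0 eR1 eR2
  have hF3 : Fv α (k+3) ≤ 41/15 := by
    have : 1 / Fv α (k+4) ≤ 11/15 := by
      rw [div_le_iff₀ (by linarith [b4.1])]; linarith [b4.1]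
    rw [e3]; linarith
  have hF2 : (97:ℝ)/41 ≤ Fv α (k+2) := by
    have : (15:ℝ)/41 ≤ 1 / Fv α (k+3) := by
      rw [le_div_iff₀ (by linarith [b3.1])]; linarith
    rw [e2]; linarith
  have hF1 : Fv α (k+1) ≤ 138/97 := by
    have : 1 / Fv α (k+2) ≤ 41/97 := by
      rw [div_le_iff₀ (by linarith [b2.1])]; linarith
    rw [e1]; linarith
  have hF0 : (373:ℝ)/138 ≤ Fv α k := by
    have : (97:ℝ)/138 ≤ 1 / Fv α (k+1) := by
      rw [le_div_iff₀ (by linarith [b1.1])]; linarith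
    rw [e0]; linarith
  have hR2 : (26:ℝ)/11 ≤ Rv α (k-2) := by
    have : (4:ℝ)/11 ≤ 1 / Rv α (k-3) := by
      rw [le_div_iff₀ (by linarith [bR3.1])]; linarith [bR3.2]
    rw [eR2]; linarith
  have hR1 : Rv α (k-1) ≤ 63/26 := by
    have : 1 / Rv α (k-2) ≤ 11/26 := by
      rw [div_le_iff₀ (by linarith [bR2.1])]; linarith
    rw [eR1]; linarith
  have hRi : (26:ℝ)/63 ≤ 1 / Rv α (k-1) := by
    rw [le_div_iff₀ (by linarith [bR1.1])]; linarith
  rw [lambdaVal_eq hα]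
  have hsq : Real.sqrt 85 < 3 * (373/138 + 26/63) := by
    rw [show (3:ℝ) * (373/138+26/63) = 27087/2898 by norm_num, Real.sqrt_lt' (by norm_num)]
    norm_num
  linarith

lemma lamIIa' (k : ℤ) (h0 : α k = 2) (h1 : α (k+1) = 1) (h2 : α (k+2) = 2)
    (h3 : α (k+3) = 2) (hm1 : α (k-1) = 2) (hm2 : α (k-2) = 1) (hm3 : α (k-3) = 1) :
    Real.sqrt 85 / 3 < lambdaVal α k := by
  have b4 := Fv_bounds hα (k+4)
  have b3 := Fv_bounds hα (k+3)
  have b2 := Fv_bounds hα (k+2)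
  have b1 := Fv_bounds hα (k+1)
  have bR1 := Rv_bounds hα (k-1)
  have bR2 := Rv_bounds hα (k-2)
  have bR3 := Rv_bounds hα (k-3)
  have bR4 := Rv_bounds hα (k-4)
  have e3 := Fv_rec hα (k+3); rw [show k+3+1 = k+4 by ring, h3] at e3
  have e2 := Fv_rec hα (k+2); rw [show k+2+1 = k+3 by ring, h2] at e2
  have e1 := Fv_rec hα (k+1); rw [show k+1+1 = k+2 by ring, h1] at e1
  have e0 := Fv_rec hα k; rw [h0] at e0
  have eR1 := Rv_rec hα (k-1); rw [show k-1-1 = k-2 by ring, hm1] at eR1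
  have eR2 := Rv_rec hα (k-2); rw [show k-2-1 = k-3 by ring, hm2] at eR2
  have eR3 := Rv_rec hα (k-3); rw [show k-3-1 = k-4 by ring, hm3] at eR3
  push_cast at e3 e2 e1 e0 eR1 eR2 eR3
  have hF3 : Fv α (k+3) ≤ 41/15 := by
    have : 1 / Fv α (k+4) ≤ 11/15 := by
      rw [div_le_iff₀ (by linarith [b4.1])]; linarith [b4.1]
    rw [e3]; linarith
  have hF2 : (97:ℝ)/41 ≤ Fv α (k+2) := by
    have : (15:ℝ)/41 ≤ 1 / Fv α (k+3) := by
      rw [le_div_iff₀ (by linarith [b3.1])]; linarith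
    rw [e2]; linarith
  have hF1 : Fv α (k+1) ≤ 138/97 := by
    have : 1 / Fv α (k+2) ≤ 41/97 := by
      rw [div_le_iff₀ (by linarith [b2.1])]; linarith
    rw [e1]; linarith
  have hF0 : (373:ℝ)/138 ≤ Fv α k := by
    have : (97:ℝ)/138 ≤ 1 / Fv α (k+1) := by
      rw [le_div_iff₀ (by linarith [b1.1])]; linarith
    rw [e0]; linarith
  have hR3 : Rv α (k-3) ≤ 26/15 := by
    have : 1 / Rv α (k-4) ≤ 11/15 := by
      rw [div_le_iff₀ (by linarith [bR4.1])]; linarith [bR4.1]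
    rw [eR3]; linarith
  have hR2 : (41:ℝ)/26 ≤ Rv α (k-2) := by
    have : (15:ℝ)/26 ≤ 1 / Rv α (k-3) := by
      rw [le_div_iff₀ (by linarith [bR3.1])]; linarith
    rw [eR2]; linarith
  have hR1 : Rv α (k-1) ≤ 108/41 := by
    have : 1 / Rv α (k-2) ≤ 26/41 := by
      rw [div_le_iff₀ (by linarith [bR2.1])]; linarith
    rw [eR1]; linarith
  have hRi : (41:ℝ)/108 ≤ 1 / Rv α (k-1) := by
    rw [le_div_iff₀ (by linarith [bR1.1])]; linarith
  rw [lambdaVal_eq hα]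
  have hsq : Real.sqrt 85 < 3 * (373/138 + 41/108) := by
    rw [show (3:ℝ) * (373/138+41/108) = 7657/828 by norm_num, Real.sqrt_lt' (by norm_num)]
    norm_num
  linarith

lemma lamIIb' (k : ℤ) (h0 : α k = 2) (hm1 : α (k-1) = 1) (hm2 : α (k-2) = 2)
    (hm3 : α (k-3) = 1) : Real.sqrt 85 / 3 < lambdaVal α k := by
  have b1 := Fv_bounds hα (k+1)
  have bR1 := Rv_bounds hα (k-1)
  have bR2 := Rv_bounds hα (k-2)
  have bR3 := Rv_bounds hα (k-3)
  have bR4 := Rv_bounds hα (k-4)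
  have e0 := Fv_rec hα k; rw [h0] at e0
  have eR1 := Rv_rec hα (k-1); rw [show k-1-1 = k-2 by ring, hm1] at eR1
  have eR2 := Rv_rec hα (k-2); rw [show k-2-1 = k-3 by ring, hm2] at eR2
  have eR3 := Rv_rec hα (k-3); rw [show k-3-1 = k-4 by ring, hm3] at eR3
  push_cast at e0 eR1 eR2 eR3
  have hF0 : (26:ℝ)/11 ≤ Fv α k := by
    have : (4:ℝ)/11 ≤ 1 / Fv α (k+1) := by
      rw [le_div_iff₀ (by linarith [b1.1])]; linarith [b1.2]
    rw [e0]; linarith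
  have hR3 : Rv α (k-3) ≤ 26/15 := by
    have : 1 / Rv α (k-4) ≤ 11/15 := by
      rw [div_le_iff₀ (by linarith [bR4.1])]; linarith [bR4.1]
    rw [eR3]; linarith
  have hR2 : (67:ℝ)/26 ≤ Rv α (k-2) := by
    have : (15:ℝ)/26 ≤ 1 / Rv α (k-3) := by
      rw [le_div_iff₀ (by linarith [bR3.1])]; linarith
    rw [eR2]; linarith
  have hR1 : Rv α (k-1) ≤ 93/67 := by
    have : 1 / Rv α (k-2) ≤ 26/67 := by
      rw [div_le_iff₀ (by linarith [bR2.1])]; linarith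
    rw [eR1]; linarith
  have hRi : (67:ℝ)/93 ≤ 1 / Rv α (k-1) := by
    rw [le_div_iff₀ (by linarith [bR1.1])]; linarith
  rw [lambdaVal_eq hα]
  have hsq : Real.sqrt 85 < 3 * (26/11 + 67/93) := by
    rw [show (3:ℝ) * (26/11+67/93) = 3155/341 by norm_num, Real.sqrt_lt' (by norm_num)]
    norm_num
  linarith

end
end CF212

namespace CF212

noncomputable def f0r : ℕ → ℝ := fun n => if n % 3 = 1 then 1 else 2
noncomputable def f1r : ℕ → ℝ := fun n => if n % 3 = 0 then 1 else 2
noncomputable def f2r : ℕ → ℝ := fun n => if n % 3 = 2 then 1 else 2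

lemma oneTwo_f0r : OneTwo f0r := by intro n; unfold f0r; split <;> norm_num
lemma oneTwo_f1r : OneTwo f1r := by intro n; unfold f1r; split <;> norm_num
lemma oneTwo_f2r : OneTwo f2r := by intro n; unfold f2r; split <;> norm_num

lemma shift_f0r : (fun i => f0r (i + 1)) = f1r := by
  funext n; simp only [f0r, f1r]
  simp only [show ((n+1) % 3 = 1) ↔ (n % 3 = 0) from by omega]

lemma shift_f1r : (fun i => f1r (i + 1)) = f2r := by
  funext n; simp only [f1r, f2r]
  simp only [show ((n+1) % 3 = 0) ↔ (n % 3 = 2) from by omega]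

lemma shift_f2r : (fun i => f2r (i + 1)) = f0r := by
  funext n; simp only [f2r, f0r]
  simp only [show ((n+1) % 3 = 2) ↔ (n % 3 = 1) from by omega]

lemma rec_f0r : cfVal f0r = 2 + 1 / cfVal f1r := by
  have := cfVal_rec oneTwo_f0r
  rw [shift_f0r] at this
  rw [this]; norm_num [f0r]

lemma rec_f1r : cfVal f1r = 1 + 1 / cfVal f2r := by
  have := cfVal_rec oneTwo_f1r
  rw [shift_f1r] at this
  rw [this]; norm_num [f1r]

lemma rec_f2r : cfVal f2r = 2 + 1 / cfVal f0r := by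
  have := cfVal_rec oneTwo_f2r
  rw [shift_f2r] at this
  rw [this]; norm_num [f2r]

lemma sqrt85_sq : Real.sqrt 85 ^ 2 = 85 := Real.sq_sqrt (by norm_num)

lemma sqrt85_gt : 9 < Real.sqrt 85 := by
  nlinarith [Real.sqrt_nonneg 85, sqrt85_sq]

lemma sqrt85_lt : Real.sqrt 85 < 10 := by
  nlinarith [Real.sqrt_nonneg 85, sqrt85_sq]

lemma solve_quad {a b c : ℝ} (ha1 : 1 ≤ a) (hb1 : 1 ≤ b) (hc1 : 1 ≤ c)
    (e0 : a = 2 + 1 / b) (e1 : b = 1 + 1 / c) (e2 : c = 2 + 1 / a) :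
    a = (7 + Real.sqrt 85) / 6 ∧ b = (5 + Real.sqrt 85) / 10 ∧
      c = (5 + Real.sqrt 85) / 6 := by
  set s := Real.sqrt 85 with hsdef
  have hs := sqrt85_sq
  have hg := sqrt85_gt
  have ha0 : (0:ℝ) < a := by linarith
  have hb0 : (0:ℝ) < b := by linarith
  have hc0 : (0:ℝ) < c := by linarith
  have h1 : a * b = 2 * b + 1 := by rw [e0]; field_simp
  have h2 : b * c = c + 1 := by rw [e1]; field_simp
  have h3 : c * a = 2 * a + 1 := by rw [e2]; field_simp
  have habc1 : a * b * c = 3 * c + 2 := by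
    calc a * b * c = (a * b) * c := by ring
      _ = (2 * b + 1) * c := by rw [h1]
      _ = 2 * (b * c) + c := by ring
      _ = 2 * (c + 1) + c := by rw [h2]
      _ = 3 * c + 2 := by ring
  have habc2 : a * b * c = 5 * b + 2 := by
    calc a * b * c = (c * a) * b := by ring
      _ = (2 * a + 1) * b := by rw [h3]
      _ = 2 * (a * b) + b := by ring
      _ = 2 * (2 * b + 1) + b := by rw [h1]
      _ = 5 * b + 2 := by ring
  have hcb : 3 * c = 5 * b := by linarith
  have hbq : 5 * b ^ 2 - 5 * b - 3 = 0 := by linear_combination 3 * h2 - (b - 1) * hcb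
  have hfac : (b - (5 + s) / 10) * (b - (5 - s) / 10) = 0 := by
    linear_combination (1/5) * hbq - (1/100) * hs
  have hbval : b = (5 + s) / 10 := by
    rcases mul_eq_zero.mp hfac with h | h
    · linarith
    · exfalso; have : b = (5 - s) / 10 := by linarith
      rw [this] at hb1; linarith
  have hcval : c = (5 + s) / 6 := by
    have : 3 * c = 5 * ((5 + s) / 10) := by rw [← hbval]; exact hcb
    linarith
  refine ⟨?_, hbval, hcval⟩
  have hb5 : (5:ℝ) + s ≠ 0 := by linarith
  rw [e0, hbval, one_div_div]
  field_simp
  linear_combination -hs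

lemma L_vals : cfVal f0r = (7 + Real.sqrt 85) / 6 ∧ cfVal f1r = (5 + Real.sqrt 85) / 10 ∧
    cfVal f2r = (5 + Real.sqrt 85) / 6 :=
  solve_quad (cfVal_bounds oneTwo_f0r).1 (cfVal_bounds oneTwo_f1r).1
    (cfVal_bounds oneTwo_f2r).1 rec_f0r rec_f1r rec_f2r

lemma per212_onetwo : ∀ n : ℤ, per212 n = 1 ∨ per212 n = 2 := by
  intro n; unfold per212; split
  · exact Or.inl rfl
  · exact Or.inr rfl

lemma per_cast (i : ℤ) : ((per212 i : ℕ) : ℝ) = if i % 3 = 1 then 1 else 2 := by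
  simp only [per212]; split <;> norm_num

lemma Fv_per0 {k : ℤ} (hk : k % 3 = 0) : Fv per212 k = cfVal f0r := by
  unfold Fv; congr 1; funext n; rw [per_cast]
  simp only [f0r]
  simp only [show ((k + (n:ℤ)) % 3 = 1) ↔ ((n:ℕ) % 3 = 1) from by omega]

lemma Fv_per1 {k : ℤ} (hk : k % 3 = 1) : Fv per212 k = cfVal f1r := by
  unfold Fv; congr 1; funext n; rw [per_cast]
  simp only [f1r]
  simp only [show ((k + (n:ℤ)) % 3 = 1) ↔ ((n:ℕ) % 3 = 0) from by omega]

lemma Fv_per2 {k : ℤ} (hk : k % 3 = 2) : Fv per212 k = cfVal f2r := by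
  unfold Fv; congr 1; funext n; rw [per_cast]
  simp only [f2r]
  simp only [show ((k + (n:ℤ)) % 3 = 1) ↔ ((n:ℕ) % 3 = 2) from by omega]

lemma Rv_per0 {k : ℤ} (hk : k % 3 = 0) : Rv per212 k = cfVal f2r := by
  unfold Rv; congr 1; funext n; rw [per_cast]
  simp only [f2r]
  simp only [show ((k - (n:ℤ)) % 3 = 1) ↔ ((n:ℕ) % 3 = 2) from by omega]

lemma Rv_per1 {k : ℤ} (hk : k % 3 = 1) : Rv per212 k = cfVal f1r := by
  unfold Rv; congr 1; funext n; rw [per_cast]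
  simp only [f1r]
  simp only [show ((k - (n:ℤ)) % 3 = 1) ↔ ((n:ℕ) % 3 = 0) from by omega]

lemma Rv_per2 {k : ℤ} (hk : k % 3 = 2) : Rv per212 k = cfVal f0r := by
  unfold Rv; congr 1; funext n; rw [per_cast]
  simp only [f0r]
  simp only [show ((k - (n:ℤ)) % 3 = 1) ↔ ((n:ℕ) % 3 = 1) from by omega]

lemma lambda_per (k : ℤ) :
    lambdaVal per212 k = if k % 3 = 1 then Real.sqrt 85 / 5 else Real.sqrt 85 / 3 := by
  obtain ⟨hL0, hL1, hL2⟩ := L_vals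
  have hs := sqrt85_sq
  have hg := sqrt85_gt
  rw [lambdaVal_eq per212_onetwo]
  have h3 : k % 3 = 0 ∨ k % 3 = 1 ∨ k % 3 = 2 := by omega
  have h7 : (7:ℝ) + Real.sqrt 85 ≠ 0 := by linarith
  have h5 : (5:ℝ) + Real.sqrt 85 ≠ 0 := by linarith
  rcases h3 with h | h | h
  · rw [Fv_per0 h, Rv_per2 (by omega : (k-1) % 3 = 2), hL0, if_neg (by omega), one_div_div]
    field_simp
    linear_combination -3 * hs
  · rw [Fv_per1 h, Rv_per0 (by omega : (k-1) % 3 = 0), hL1, hL2, if_pos h, one_div_div]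
    field_simp
    linear_combination -5 * hs
  · rw [Fv_per2 h, Rv_per1 (by omega : (k-1) % 3 = 1), hL2, hL1, if_neg (by omega), one_div_div]
    field_simp
    linear_combination -3 * hs

end CF212

namespace CF212

lemma per_of_mod0 {i : ℤ} (h : i % 3 = 0) : per212 i = 2 := by
  unfold per212; rw [if_neg]; omega

lemma per_of_mod1 {i : ℤ} (h : i % 3 = 1) : per212 i = 1 := by
  unfold per212; rw [if_pos h]

lemma per_of_mod2 {i : ℤ} (h : i % 3 = 2) : per212 i = 2 := by
  unfold per212; rw [if_neg]; omega

section
variable {α : ℤ → ℕ} (hα : ∀ n, α n = 1 ∨ α n = 2)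
include hα

lemma bddAbove_lambda : BddAbove (Set.range (lambdaVal α)) := by
  refine ⟨4, ?_⟩
  rintro x ⟨k, rfl⟩
  rw [lambdaVal_eq hα]
  have hf := Fv_bounds hα k
  have hr := Rv_bounds hα (k-1)
  have : 1 / Rv α (k-1) ≤ 1 := by
    rw [div_le_one (by linarith [hr.1])]; linarith [hr.1]
  linarith [hf.2]

lemma forced {j : ℤ} (h0 : α j = 2) (h1 : α (j+1) = 1) (h2 : α (j+2) = 2)
    (H : ∀ k, lambdaVal α k < Real.sqrt 85 / 3) :
    ∀ i : ℤ, α (j + i) = per212 i := by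
  have main : ∀ N : ℕ, ∀ i : ℤ, -(N:ℤ) - 1 ≤ i → i ≤ (N:ℤ) + 3 → α (j + i) = per212 i := by
    intro N
    induction N with
    | zero =>
      intro i hi1 hi2
      norm_num at hi1 hi2
      have h3 : α (j+3) = 2 := by
        rcases hα (j+3) with h | h
        · exact absurd (lamB hα j h0 h1 h2 h).le (not_le.mpr (H j))
        · exact h
      have hm : α (j-1) = 2 := by
        rcases hα (j-1) with h | h
        · exact absurd (lamA hα j h0 h1 h2 h).le (not_le.mpr (H j))
        · exact h
      interval_cases i
      · rw [show j + (-1:ℤ) = j - 1 by ring, hm]; decide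
      · rw [show j + (0:ℤ) = j by ring, h0]; decide
      · rw [h1]; decide
      · rw [h2]; decide
      · rw [h3]; decide
    | succ N ih =>
      intro i hi1 hi2
      push_cast at hi1 hi2
      by_cases hold : -(N:ℤ) - 1 ≤ i ∧ i ≤ (N:ℤ) + 3
      · exact ih i hold.1 hold.2
      · have hcase : i = -(N:ℤ) - 2 ∨ i = (N:ℤ) + 4 := by omega
        rcases hcase with rfl | rfl
        · -- left extension
          set q : ℤ := -(N:ℤ) - 2 with hq
          have hq3 : q % 3 = 0 ∨ q % 3 = 1 ∨ q % 3 = 2 := by omega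
          rcases hα (j + q) with hv | hv
          · -- α (j+q) = 1 : fine if per = 1, i.e. q % 3 = 1; else contradiction
            rcases hq3 with hmod | hmod | hmod
            · -- expected 2, got 1 : lamIIa' at k = j+q+3 (needs N ≥ 1)
              exfalso
              have hN1 : 1 ≤ (N:ℤ) := by omega
              set k : ℤ := j + q + 3 with hk
              have d0 : α k = 2 := by
                rw [show k = j + (q+3) by ring, ih (q+3) (by omega) (by omega)]
                exact per_of_mod0 (by omega)
              have d1 : α (k+1) = 1 := by
                rw [show k+1 = j + (q+4) by ring, ih (q+4) (by omega) (by omega)]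
                exact per_of_mod1 (by omega)
              have d2 : α (k+2) = 2 := by
                rw [show k+2 = j + (q+5) by ring, ih (q+5) (by omega) (by omega)]
                exact per_of_mod2 (by omega)
              have d3 : α (k+3) = 2 := by
                rw [show k+3 = j + (q+6) by ring, ih (q+6) (by omega) (by omega)]
                exact per_of_mod0 (by omega)
              have dm1 : α (k-1) = 2 := by
                rw [show k-1 = j + (q+2) by ring, ih (q+2) (by omega) (by omega)]
                exact per_of_mod2 (by omega)
              have dm2 : α (k-2) = 1 := by
                rw [show k-2 = j + (q+1) by ring, ih (q+1) (by omega) (by omega)]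
                exact per_of_mod1 (by omega)
              have dm3 : α (k-3) = 1 := by
                rw [show k-3 = j + q by ring]; exact hv
              exact absurd (lamIIa' hα k d0 d1 d2 d3 dm1 dm2 dm3).le (not_le.mpr (H k))
            · rw [hv, per_of_mod1 hmod]
            · -- expected 2, got 1 : lamIIb' at k = j+q+3
              exfalso
              set k : ℤ := j + q + 3 with hk
              have d0 : α k = 2 := by
                rw [show k = j + (q+3) by ring, ih (q+3) (by omega) (by omega)]
                exact per_of_mod2 (by omega)
              have dm1 : α (k-1) = 1 := by
                rw [show k-1 = j + (q+2) by ring, ih (q+2) (by omega) (by omega)]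
                exact per_of_mod1 (by omega)
              have dm2 : α (k-2) = 2 := by
                rw [show k-2 = j + (q+1) by ring, ih (q+1) (by omega) (by omega)]
                exact per_of_mod0 (by omega)
              have dm3 : α (k-3) = 1 := by
                rw [show k-3 = j + q by ring]; exact hv
              exact absurd (lamIIb' hα k d0 dm1 dm2 dm3).le (not_le.mpr (H k))
          · -- α (j+q) = 2 : fine unless per = 1, i.e. q % 3 = 1
            rcases hq3 with hmod | hmod | hmod
            · rw [hv, per_of_mod0 hmod]
            · -- expected 1, got 2 : lamI' at k = j+q+2
              exfalso
              set k : ℤ := j + q + 2 with hk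
              have d0 : α k = 2 := by
                rw [show k = j + (q+2) by ring, ih (q+2) (by omega) (by omega)]
                exact per_of_mod0 (by omega)
              have d1 : α (k+1) = 1 := by
                rw [show k+1 = j + (q+3) by ring, ih (q+3) (by omega) (by omega)]
                exact per_of_mod1 (by omega)
              have d2 : α (k+2) = 2 := by
                rw [show k+2 = j + (q+4) by ring, ih (q+4) (by omega) (by omega)]
                exact per_of_mod2 (by omega)
              have d3 : α (k+3) = 2 := by
                rw [show k+3 = j + (q+5) by ring, ih (q+5) (by omega) (by omega)]
                exact per_of_mod0 (by omega)
              have dm1 : α (k-1) = 2 := by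
                rw [show k-1 = j + (q+1) by ring, ih (q+1) (by omega) (by omega)]
                exact per_of_mod2 (by omega)
              have dm2 : α (k-2) = 2 := by
                rw [show k-2 = j + q by ring]; exact hv
              exact absurd (lamI' hα k d0 d1 d2 d3 dm1 dm2).le (not_le.mpr (H k))
            · rw [hv, per_of_mod2 hmod]
        · -- right extension, i = N + 4
          set m : ℤ := (N:ℤ) + 4 with hm
          have hm3 : m % 3 = 0 ∨ m % 3 = 1 ∨ m % 3 = 2 := by omega
          rcases hα (j + m) with hv | hv
          · rcases hm3 with hmod | hmod | hmod
            · -- expected 2, got 1 : lamB at k = j+m-3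
              exfalso
              set k : ℤ := j + m - 3 with hk
              have d0 : α k = 2 := by
                rw [show k = j + (m-3) by ring, ih (m-3) (by omega) (by omega)]
                exact per_of_mod0 (by omega)
              have d1 : α (k+1) = 1 := by
                rw [show k+1 = j + (m-2) by ring, ih (m-2) (by omega) (by omega)]
                exact per_of_mod1 (by omega)
              have d2 : α (k+2) = 2 := by
                rw [show k+2 = j + (m-1) by ring, ih (m-1) (by omega) (by omega)]
                exact per_of_mod2 (by omega)
              have d3 : α (k+3) = 1 := by
                rw [show k+3 = j + m by ring]; exact hv
              exact absurd (lamB hα k d0 d1 d2 d3).le (not_le.mpr (H k))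
            · rw [hv, per_of_mod1 hmod]
            · -- expected 2, got 1 : lamIIb at k = j+m-3 (needs N ≥ 1)
              exfalso
              have hN1 : 1 ≤ (N:ℤ) := by omega
              set k : ℤ := j + m - 3 with hk
              have d0 : α k = 2 := by
                rw [show k = j + (m-3) by ring, ih (m-3) (by omega) (by omega)]
                exact per_of_mod2 (by omega)
              have d1 : α (k+1) = 2 := by
                rw [show k+1 = j + (m-2) by ring, ih (m-2) (by omega) (by omega)]
                exact per_of_mod0 (by omega)
              have d2 : α (k+2) = 1 := by
                rw [show k+2 = j + (m-1) by ring, ih (m-1) (by omega) (by omega)]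
                exact per_of_mod1 (by omega)
              have d3 : α (k+3) = 1 := by
                rw [show k+3 = j + m by ring]; exact hv
              have dm1 : α (k-1) = 1 := by
                rw [show k-1 = j + (m-4) by ring, ih (m-4) (by omega) (by omega)]
                exact per_of_mod1 (by omega)
              have dm2 : α (k-2) = 2 := by
                rw [show k-2 = j + (m-5) by ring, ih (m-5) (by omega) (by omega)]
                exact per_of_mod0 (by omega)
              have dm3 : α (k-3) = 2 := by
                rw [show k-3 = j + (m-6) by ring, ih (m-6) (by omega) (by omega)]
                exact per_of_mod2 (by omega)
              exact absurd (lamIIb hα k d0 d1 d2 d3 dm1 dm2 dm3).le (not_le.mpr (H k))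
          · rcases hm3 with hmod | hmod | hmod
            · rw [hv, per_of_mod0 hmod]
            · -- expected 1, got 2 : lamI at k = j+m-2
              exfalso
              set k : ℤ := j + m - 2 with hk
              have d0 : α k = 2 := by
                rw [show k = j + (m-2) by ring, ih (m-2) (by omega) (by omega)]
                exact per_of_mod2 (by omega)
              have d1 : α (k+1) = 2 := by
                rw [show k+1 = j + (m-1) by ring, ih (m-1) (by omega) (by omega)]
                exact per_of_mod0 (by omega)
              have d2 : α (k+2) = 2 := by
                rw [show k+2 = j + m by ring]; exact hv
              have dm1 : α (k-1) = 1 := by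
                rw [show k-1 = j + (m-3) by ring, ih (m-3) (by omega) (by omega)]
                exact per_of_mod1 (by omega)
              have dm2 : α (k-2) = 2 := by
                rw [show k-2 = j + (m-4) by ring, ih (m-4) (by omega) (by omega)]
                exact per_of_mod0 (by omega)
              have dm3 : α (k-3) = 2 := by
                rw [show k-3 = j + (m-5) by ring, ih (m-5) (by omega) (by omega)]
                exact per_of_mod2 (by omega)
              exact absurd (lamI hα k d0 d1 d2 dm1 dm2 dm3).le (not_le.mpr (H k))
            · rw [hv, per_of_mod2 hmod]
  intro i
  exact main (i.natAbs + 3) i (by omega) (by omega)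

lemma lower_bound {j : ℤ} (h0 : α j = 2) (h1 : α (j+1) = 1) (h2 : α (j+2) = 2) :
    Real.sqrt 85 / 3 ≤ markovValue α := by
  by_cases H : ∀ k, lambdaVal α k < Real.sqrt 85 / 3
  · exfalso
    have hall := forced hα h0 h1 h2 H
    have heq : lambdaVal α j = lambdaVal per212 0 := by
      unfold lambdaVal
      congr 1
      · congr 1; funext n
        rw [hall (n:ℤ), zero_add]
      · congr 1; funext n
        rcases eq_or_ne n 0 with rfl | hn
        · simp
        · rw [if_neg hn, if_neg hn,
            show j - (n:ℤ) = j + (-(n:ℤ)) by ring, hall (-(n:ℤ)),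
            show (0:ℤ) - (n:ℤ) = -(n:ℤ) by ring]
    have := H j
    rw [heq, lambda_per 0] at this
    norm_num at this
  · push_neg at H
    obtain ⟨k, hk⟩ := H
    exact hk.trans (le_ciSup (bddAbove_lambda hα) k)

end
end CF212

namespace CF212

lemma markov_per : markovValue per212 = Real.sqrt 85 / 3 := by
  have hg := sqrt85_gt
  apply le_antisymm
  · apply ciSup_le
    intro k
    rw [lambda_per k]
    split
    · linarith
    · exact le_rfl
  · have h := le_ciSup (bddAbove_lambda per212_onetwo) (0:ℤ)
    rw [lambda_per 0] at h
    norm_num at h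
    exact h

lemma sum_val :
    cfVal (fun n : ℕ => if n = 0 then 2 else if n % 3 = 1 then 1 else 2) +
      cfVal (fun n : ℕ => if n = 0 then 0 else if n % 3 = 2 then 1 else 2) =
    Real.sqrt 85 / 3 := by
  have hg := sqrt85_gt
  have hs := sqrt85_sq
  have hX : (fun n : ℕ => if n = 0 then (2:ℝ) else if n % 3 = 1 then 1 else 2) = f0r := by
    funext n
    unfold f0r
    rcases eq_or_ne n 0 with rfl | h
    · norm_num
    · rw [if_neg h]
  have hsft : (fun i : ℕ => (fun n : ℕ => if n = 0 then (0:ℝ) else if n % 3 = 2 then 1 else 2) (i+1)) = f0r := by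
    funext i
    simp only [Nat.succ_ne_zero, if_false]
    unfold f0r
    simp only [show ((i+1) % 3 = 2) ↔ (i % 3 = 1) from by omega]
  have hY : cfVal (fun n : ℕ => if n = 0 then (0:ℝ) else if n % 3 = 2 then 1 else 2) =
      1 / cfVal f0r := by
    have h0 : (fun n : ℕ => if n = 0 then (0:ℝ) else if n % 3 = 2 then 1 else 2) 0 = 0 := rfl
    have := cfVal_zero_rec
      (a := fun n : ℕ => if n = 0 then (0:ℝ) else if n % 3 = 2 then 1 else 2) h0
      (by rw [hsft]; exact oneTwo_f0r)
    rw [this, hsft]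
  rw [hX, hY, L_vals.1, one_div_div]
  have h7 : (7:ℝ) + Real.sqrt 85 ≠ 0 := by linarith
  field_simp
  linear_combination -3 * hs

end CF212


/-- Every `α ∈ {1,2}^ℤ` containing the factor `(2,1,2)` has Markov value at least
`√85/3`, attained by the periodic sequence of period `(2,1,2)`, whose Markov value
is `[2; \overline{1,2,2}] + [0; \overline{2,1,2}] = √85/3`. Thus `√85/3` is the
smallest Markov value among `{1,2}`-sequences containing the factor `(2,1,2)`. -/
theorem smallest_markov_value_with_212 :
    (∀ α : ℤ → ℕ, (∀ n, α n = 1 ∨ α n = 2) → hasFactor α [2, 1, 2] →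
      Real.sqrt 85 / 3 ≤ markovValue α) ∧
    (∀ n, per212 n = 1 ∨ per212 n = 2) ∧
    hasFactor per212 [2, 1, 2] ∧
    markovValue per212 =
      cfVal (fun n => if n = 0 then 2 else if n % 3 = 1 then 1 else 2) +
        cfVal (fun n => if n = 0 then 0 else if n % 3 = 2 then 1 else 2) ∧
    cfVal (fun n => if n = 0 then 2 else if n % 3 = 1 then 1 else 2) +
        cfVal (fun n => if n = 0 then 0 else if n % 3 = 2 then 1 else 2) =
      Real.sqrt 85 / 3 := by
  refine ⟨?_, CF212.per212_onetwo, ?_, ?_, CF212.sum_val⟩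
  · intro α hα hfac
    obtain ⟨j, hj⟩ := hfac
    have h0 : α j = 2 := by have := hj ⟨0, by norm_num⟩; simpa using this
    have h1 : α (j+1) = 1 := by have := hj ⟨1, by norm_num⟩; simpa using this
    have h2 : α (j+2) = 2 := by have := hj ⟨2, by norm_num⟩; simpa using this
    exact CF212.lower_bound hα h0 h1 h2
  · exact ⟨0, by intro i; fin_cases i <;> decide⟩
  · rw [CF212.markov_per, CF212.sum_val]
end
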